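/- arXiv:2403.01947 — 4 statements merged into one kernel-verified Lean document; each statement's English description precedes it below -/
import Mathlib

section
/- A split graph G is ambiguous if and only if every maximal clique of G contains a simplicial vertex. -/
namespace CAG

variable {V : Type*}

/-- The circle on which circular-arc models live. -/
abbrev Circle : Type := AddCircle (1 : ℝ)

/-- The closed arc of the circle starting at `s` and going a length `ℓ` in the
positive direction. -/
def circleArc (s ℓ : ℝ) : Set Circle :=
  (fun x : ℝ => (x : Circle)) '' Set.Icc s (s + ℓ)

/-- A circular-arc model of a graph `G`: an assignment of nonempty closed arcs of the
circle to vertices such that two distinct vertices are adjacent iff their arcs meet. -/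
structure CircularArcModel (G : SimpleGraph V) where
  arc : V → Set Circle
  isArc : ∀ v : V, ∃ s ℓ : ℝ, 0 ≤ ℓ ∧ arc v = circleArc s ℓ
  adj_iff : ∀ u v : V, u ≠ v → (G.Adj u v ↔ (arc u ∩ arc v).Nonempty)

/-- A graph is a circular-arc graph if it has a circular-arc model. -/
def IsCircularArcGraph (G : SimpleGraph V) : Prop := Nonempty (CircularArcModel G)

/-- An interval model of a graph `G`: an assignment of nonempty closed real intervals
to vertices such that two distinct vertices are adjacent iff their intervals meet. -/
structure IntervalModel (G : SimpleGraph V) where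
  lo : V → ℝ
  hi : V → ℝ
  lo_le_hi : ∀ v : V, lo v ≤ hi v
  adj_iff : ∀ u v : V, u ≠ v →
    (G.Adj u v ↔ (Set.Icc (lo u) (hi u) ∩ Set.Icc (lo v) (hi v)).Nonempty)

/-- The interval assigned to a vertex by an interval model. -/
def IntervalModel.ival {G : SimpleGraph V} (M : IntervalModel G) (v : V) : Set ℝ :=
  Set.Icc (M.lo v) (M.hi v)

/-- A graph is an interval graph if it has an interval model. -/
def IsIntervalGraph (G : SimpleGraph V) : Prop := Nonempty (IntervalModel G)

/-- The closed neighbourhood `N[v]` of a vertex. -/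
def closedNbhd (G : SimpleGraph V) (v : V) : Set V := insert v (G.neighborSet v)

/-- A vertex is simplicial if its closed neighbourhood is a clique. -/
def IsSimplicial (G : SimpleGraph V) (v : V) : Prop := G.IsClique (closedNbhd G v)

/-- The cycle graph on `n` vertices. -/
def cycleG (n : ℕ) : SimpleGraph (Fin n) :=
  SimpleGraph.fromRel (fun a b => (a.val + 1) % n = b.val)

/-- `G` contains an induced copy of `F`. -/
def InducedCopy {W : Type*} (F : SimpleGraph W) (G : SimpleGraph V) : Prop :=
  Nonempty (F ↪g G)

/-- A graph is chordal if it has no induced cycle of length at least 4. -/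
def Chordal (G : SimpleGraph V) : Prop :=
  ∀ n : ℕ, 4 ≤ n → ¬ InducedCopy (cycleG n) G

/-- The adjacency relation of the auxiliary graph `G^K`. -/
def auxAdj (G : SimpleGraph V) (K : Set V) (u v : V) : Prop :=
  (u ∈ K ∧ v ∈ K ∧ G.neighborSet u ∪ G.neighborSet v ≠ Set.univ) ∨
  (u ∉ K ∧ v ∉ K ∧ G.Adj u v) ∨
  (u ∈ K ∧ v ∉ K ∧ ¬ closedNbhd G v ⊆ closedNbhd G u) ∨
  (v ∈ K ∧ u ∉ K ∧ ¬ closedNbhd G u ⊆ closedNbhd G v)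

/-- The auxiliary graph `G^K` associated with a graph `G` and a clique `K`. -/
def auxGraph (G : SimpleGraph V) (K : Set V) : SimpleGraph V where
  Adj u v := u ≠ v ∧ auxAdj G K u v
  symm := by
    constructor
    rintro u v ⟨hne, h⟩
    refine ⟨hne.symm, ?_⟩
    rcases h with ⟨h1, h2, h3⟩ | ⟨h1, h2, h3⟩ | ⟨h1, h2, h3⟩ | ⟨h1, h2, h3⟩
    · exact Or.inl ⟨h2, h1, by rwa [Set.union_comm]⟩
    · exact Or.inr <| Or.inl ⟨h2, h1, h3.symm⟩
    · exact Or.inr <| Or.inr <| Or.inr ⟨h1, h2, h3⟩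
    · exact Or.inr <| Or.inr <| Or.inl ⟨h1, h2, h3⟩
  loopless := ⟨fun _ h => h.1 rfl⟩

/-- Condition (♯): `G^K` admits an interval model in which, for every `v ∈ K` and
`u ∉ K`, the interval of `v` contains the interval of `u` iff `u` and `v` are not
adjacent in `G`. -/
def SatisfiesSharp (G : SimpleGraph V) (K : Set V) : Prop :=
  ∃ M : IntervalModel (auxGraph G K),
    ∀ v ∈ K, ∀ u ∉ K, (M.ival u ⊆ M.ival v ↔ ¬ G.Adj v u)

/-- An independent set of a graph. -/
def IsIndependentSet (G : SimpleGraph V) (s : Set V) : Prop :=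
  ∀ ⦃u⦄, u ∈ s → ∀ ⦃v⦄, v ∈ s → u ≠ v → ¬ G.Adj u v

/-- A split partition: a partition of the vertex set into a clique and an independent set. -/
def IsSplitPartition (G : SimpleGraph V) (K S : Set V) : Prop :=
  K ∪ S = Set.univ ∧ Disjoint K S ∧ G.IsClique K ∧ IsIndependentSet G S

/-- A split graph. -/
def IsSplitGraph (G : SimpleGraph V) : Prop := ∃ K S : Set V, IsSplitPartition G K S

/-- A split graph is ambiguous if it has two distinct split partitions. -/
def Ambiguous (G : SimpleGraph V) : Prop :=
  ∃ K₁ S₁ K₂ S₂ : Set V, IsSplitPartition G K₁ S₁ ∧ IsSplitPartition G K₂ S₂ ∧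
    (K₁, S₁) ≠ (K₂, S₂)

/-- A maximal clique (as a set of vertices). -/
def IsMaxCliqueSet (G : SimpleGraph V) (C : Set V) : Prop :=
  G.IsClique C ∧ ∀ C' : Set V, G.IsClique C' → C ⊆ C' → C = C'

/-- A Helly circular-arc graph: one admitting a circular-arc model in which the arcs of
every maximal clique have a common point. -/
def IsHellyCircularArcGraph (G : SimpleGraph V) : Prop :=
  ∃ M : CircularArcModel G, ∀ C : Set V, IsMaxCliqueSet G C →
    ∃ p : Circle, ∀ v ∈ C, p ∈ M.arc v

/-- The edge `ab` lies on an induced 4-cycle. -/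
def EdgeOnInducedC4 (G : SimpleGraph V) (a b : V) : Prop :=
  ∃ c d : V, a ≠ c ∧ b ≠ d ∧ G.Adj a b ∧ G.Adj b c ∧ G.Adj c d ∧ G.Adj d a ∧
    ¬ G.Adj a c ∧ ¬ G.Adj b d

/-- A normalized circular-arc model. -/
def IsNormalized {G : SimpleGraph V} (M : CircularArcModel G) : Prop :=
  ∀ v₁ v₂ : V, G.Adj v₁ v₂ →
    (closedNbhd G v₂ ⊆ closedNbhd G v₁ → M.arc v₂ ⊆ M.arc v₁) ∧
    (G.neighborSet v₁ ∪ G.neighborSet v₂ = Set.univ → ¬ EdgeOnInducedC4 G v₁ v₂ →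
      M.arc v₁ ∪ M.arc v₂ = Set.univ)

/-- A universal vertex: a vertex adjacent to all other vertices. -/
def HasUniversalVertex (G : SimpleGraph V) : Prop :=
  ∃ v : V, ∀ u : V, u ≠ v → G.Adj v u

/-- `w` is a witness of the set `X ⊆ K`: a vertex of `S` adjacent in `G^K` to all of `X`. -/
def WitnessOf (G : SimpleGraph V) (K S : Set V) (w : V) (X : Set V) : Prop :=
  w ∈ S ∧ ∀ x ∈ X, (auxGraph G K).Adj w x

/-- A set `X` is witnessed if it has a witness. -/
def Witnessed (G : SimpleGraph V) (K S : Set V) (X : Set V) : Prop :=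
  ∃ w : V, WitnessOf G K S w X

/-- The induced subgraph of `G^K` on the vertex set `F` is witnessed: every maximal
clique of this subgraph that is disjoint from `S` is witnessed. -/
def WitnessedCopy (G : SimpleGraph V) (K S F : Set V) : Prop :=
  ∀ C ⊆ F, (auxGraph G K).IsClique C →
    (∀ C' ⊆ F, (auxGraph G K).IsClique C' → C ⊆ C' → C = C') →
    Disjoint C S → Witnessed G K S C

/-- The sun: a triangle 0,1,2 together with degree-two vertices 3 (adjacent to 0,1),
4 (adjacent to 1,2) and 5 (adjacent to 0,2). -/
def sunF : SimpleGraph (Fin 6) :=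
  SimpleGraph.fromRel (fun a b =>
    (a = 0 ∧ b = 1) ∨ (a = 0 ∧ b = 2) ∨ (a = 1 ∧ b = 2) ∨
    (a = 3 ∧ (b = 0 ∨ b = 1)) ∨ (a = 4 ∧ (b = 1 ∨ b = 2)) ∨ (a = 5 ∧ (b = 0 ∨ b = 2)))

/-- The long claw: centre 0 adjacent to 1,2,3; pendant vertices 4,5,6 attached to
1,2,3 respectively. -/
def longClaw : SimpleGraph (Fin 7) :=
  SimpleGraph.fromRel (fun a b =>
    (a = 0 ∧ (b = 1 ∨ b = 2 ∨ b = 3)) ∨ (a = 1 ∧ b = 4) ∨ (a = 2 ∧ b = 5) ∨ (a = 3 ∧ b = 6))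

/-- The whipping top, with vertices v0 = 0, v1 = 1, v2 = 2, v3 = 3, x1 = 4, x2 = 5,
x3 = 6: the path x1-v1-v2-v3-x3, with v0 adjacent to x1, v1, v2, v3, x3 and x2
adjacent exactly to v2. -/
def whippingTop : SimpleGraph (Fin 7) :=
  SimpleGraph.fromRel (fun a b =>
    (a = 4 ∧ b = 1) ∨ (a = 1 ∧ b = 2) ∨ (a = 2 ∧ b = 3) ∨ (a = 3 ∧ b = 6) ∨
    (a = 0 ∧ (b = 4 ∨ b = 1 ∨ b = 2 ∨ b = 3 ∨ b = 6)) ∨ (a = 5 ∧ b = 2))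

/-- The † graph on `p + 4` vertices: an induced path `v_1 … v_p` (the `inl` vertices),
a vertex `u0 = inr 0` adjacent to all `v_i`, and vertices `x1 = inr 1`, `x2 = inr 2`,
`x3 = inr 3` adjacent exactly to `v_1`, `u0`, `v_p` respectively. -/
def dagGraph (p : ℕ) : SimpleGraph (Fin p ⊕ Fin 4) :=
  SimpleGraph.fromRel (fun a b =>
    match a, b with
    | Sum.inl i, Sum.inl j => j.val = i.val + 1
    | Sum.inr u, Sum.inl j => u = 0 ∨ (u = 1 ∧ j.val = 0) ∨ (u = 3 ∧ j.val + 1 = p)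
    | Sum.inr u, Sum.inr w => u = 0 ∧ w = 2
    | _, _ => False)

/-- The ‡ graph on `p + 5` vertices: an induced path `v_1 … v_p` (the `inl` vertices),
adjacent vertices `u1 = inr 0` and `u2 = inr 1` each adjacent to all `v_i`, and
vertices `x1 = inr 2` (adjacent exactly to `v_1, u1`), `x2 = inr 3` (adjacent exactly
to `u1, u2`) and `x3 = inr 4` (adjacent exactly to `v_p, u2`). -/
def ddagGraph (p : ℕ) : SimpleGraph (Fin p ⊕ Fin 5) :=
  SimpleGraph.fromRel (fun a b =>
    match a, b with
    | Sum.inl i, Sum.inl j => j.val = i.val + 1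
    | Sum.inr u, Sum.inl j =>
        u = 0 ∨ u = 1 ∨ (u = 2 ∧ j.val = 0) ∨ (u = 4 ∧ j.val + 1 = p)
    | Sum.inr u, Sum.inr w =>
        (u = 0 ∧ w = 1) ∨ (u = 2 ∧ w = 0) ∨ (u = 3 ∧ (w = 0 ∨ w = 1)) ∨ (u = 4 ∧ w = 1)
    | _, _ => False)

/-- A graph is a minimal non-interval graph iff it is isomorphic to a hole, the long
claw, the whipping top, a † graph, or a ‡ graph. -/
def IsMinimalNonIntervalGraph {W : Type*} (F : SimpleGraph W) : Prop :=
  (∃ n : ℕ, 4 ≤ n ∧ Nonempty (F ≃g cycleG n)) ∨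
  Nonempty (F ≃g longClaw) ∨
  Nonempty (F ≃g whippingTop) ∨
  (∃ p : ℕ, 2 ≤ p ∧ Nonempty (F ≃g dagGraph p)) ∨
  (∃ p : ℕ, 1 ≤ p ∧ Nonempty (F ≃g ddagGraph p))

/-- The `k`-sun: the `inl` vertices form a clique (the even-numbered vertices of the
cycle of length `2k`), the `inr` vertices are independent, and `inr j` is adjacent to
`inl j` and `inl ((j+1) mod k)`. -/
def sunGraph (k : ℕ) : SimpleGraph (Fin k ⊕ Fin k) :=
  SimpleGraph.fromRel (fun a b =>
    match a, b with
    | Sum.inl _, Sum.inl _ => True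
    | Sum.inl i, Sum.inr j => i = j ∨ i.val = (j.val + 1) % k
    | _, _ => False)

/-- The graph `\overline{S_k}^+`: the complement of the `k`-sun together with a new
vertex (`none`) adjacent exactly to the `k` vertices forming a clique in the
complement (the `inr` vertices). -/
def sunComplPlus (k : ℕ) : SimpleGraph (Option (Fin k ⊕ Fin k)) :=
  SimpleGraph.fromRel (fun a b =>
    match a, b with
    | some x, some y => (sunGraph k)ᶜ.Adj x y
    | some (Sum.inr _), none => True
    | _, _ => False)

/-- The graph `S^1_k`: the disjoint union of a sun and the gadget `D_k`, with two
triangle vertices of the sun identified with `v_1` and `v_k` of the gadget, plus all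
edges between `{v_2, …, v_{k-1}}` and the four remaining sun vertices.  Here the
`inl` vertices are the gadget clique `v_1 … v_k` (0-based), `inr (inl a)` is the
gadget independent vertex `w_{a+1}`, and `inr (inr t)` for `t = 0,1,2,3` are the
third triangle vertex, and the three degree-two sun vertices adjacent (in the sun) to
`{v_1,v_k}`, `{v_1,t}`, `{v_k,t}` respectively. -/
def S1 (k : ℕ) : SimpleGraph (Fin k ⊕ (Fin (k - 1) ⊕ Fin 4)) :=
  SimpleGraph.fromRel (fun x y =>
    match x, y with
    | Sum.inl _, Sum.inl _ => True
    | Sum.inr (Sum.inl a), Sum.inl b => b.val ≠ a.val ∧ b.val ≠ a.val + 1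
    | Sum.inr (Sum.inr t), Sum.inl b =>
        t = 0 ∨ t = 1 ∨ (t = 2 ∧ b.val + 1 ≠ k) ∨ (t = 3 ∧ b.val ≠ 0)
    | Sum.inr (Sum.inr t), Sum.inr (Sum.inr t') => t = 0 ∧ (t' = 2 ∨ t' = 3)
    | _, _ => False)

/-- The graph `S^2_k`: the disjoint union of a rising sun and the gadget `D_k`, with
the two degree-five vertices of the rising sun identified with `v_1` and `v_k` of the
gadget, plus all edges between `{v_2, …, v_{k-1}}` and the five remaining rising-sun
vertices.  Here the `inl` vertices are the gadget clique `v_1 … v_k` (0-based),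
`inr (inl a)` is the gadget independent vertex `w_{a+1}`, and `inr (inr t)` for
`t = 0,…,4` are `d1`, `d2`, `x1`, `x2`, `x3` of the rising sun. -/
def S2 (k : ℕ) : SimpleGraph (Fin k ⊕ (Fin (k - 1) ⊕ Fin 5)) :=
  SimpleGraph.fromRel (fun x y =>
    match x, y with
    | Sum.inl _, Sum.inl _ => True
    | Sum.inr (Sum.inl a), Sum.inl b => b.val ≠ a.val ∧ b.val ≠ a.val + 1
    | Sum.inr (Sum.inr t), Sum.inl b =>
        t = 0 ∨ t = 1 ∨ (t = 2 ∧ b.val + 1 ≠ k) ∨ t = 3 ∨ (t = 4 ∧ b.val ≠ 0)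
    | Sum.inr (Sum.inr t), Sum.inr (Sum.inr t') =>
        (t = 0 ∧ t' = 1) ∨ (t = 0 ∧ t' = 2) ∨ (t = 1 ∧ t' = 4)
    | _, _ => False)

/-- The graph `F1` on 10 vertices: a clique `{0,1,2,3}` (= `v0,…,v3`), vertices
`x1 = 4, x2 = 5, x3 = 6` where `x_i` is adjacent exactly to `v0` and the two `v_j`
with `j ∈ {1,2,3} \ {i}`, and vertices `w1 = 7, w2 = 8, w3 = 9` where `w_i` is
adjacent exactly to the two `v_j` with `j ∈ {1,2,3} \ {i}`. -/
def F1 : SimpleGraph (Fin 10) :=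
  SimpleGraph.fromRel (fun a b =>
    (a.val < 4 ∧ b.val < 4) ∨
    (a = 4 ∧ (b = 0 ∨ b = 2 ∨ b = 3)) ∨
    (a = 5 ∧ (b = 0 ∨ b = 1 ∨ b = 3)) ∨
    (a = 6 ∧ (b = 0 ∨ b = 1 ∨ b = 2)) ∨
    (a = 7 ∧ (b = 2 ∨ b = 3)) ∨
    (a = 8 ∧ (b = 1 ∨ b = 3)) ∨
    (a = 9 ∧ (b = 1 ∨ b = 2)))

/-- The graph `F2` on 9 vertices: a clique `{0,1,2,3}` (= `v0,…,v3`) together with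
`x1 = 4` adjacent exactly to `v2, v3`; `x2 = 5` adjacent exactly to `v0, v1, v3`;
`x3 = 6` adjacent exactly to `v1, v2`; `w1 = 7` adjacent exactly to `v3`; and
`w2 = 8` adjacent exactly to `v1`. -/
def F2 : SimpleGraph (Fin 9) :=
  SimpleGraph.fromRel (fun a b =>
    (a.val < 4 ∧ b.val < 4) ∨
    (a = 4 ∧ (b = 2 ∨ b = 3)) ∨
    (a = 5 ∧ (b = 0 ∨ b = 1 ∨ b = 3)) ∨
    (a = 6 ∧ (b = 1 ∨ b = 2)) ∨
    (a = 7 ∧ b = 3) ∨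
    (a = 8 ∧ b = 1))

/-- The net plus an isolated vertex: triangle `0,1,2`, pendant vertices `3,4,5`
attached to `0,1,2` respectively, and an isolated vertex `6`. -/
def netStar : SimpleGraph (Fin 7) :=
  SimpleGraph.fromRel (fun a b =>
    (a = 0 ∧ b = 1) ∨ (a = 0 ∧ b = 2) ∨ (a = 1 ∧ b = 2) ∨
    (a = 3 ∧ b = 0) ∨ (a = 4 ∧ b = 1) ∨ (a = 5 ∧ b = 2))

/-- The graph `W`: the complement of the 4-sun — a clique `0,1,2,3` (= `v1,…,v4`)
plus an independent set `4,5,6,7` (= `u1,…,u4`) with `u_i` adjacent exactly to `v_i`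
and `v_{i+1 mod 4}` — together with a new vertex `8` adjacent exactly to `v1 = 0` and
`v3 = 2`. -/
def Wgraph : SimpleGraph (Fin 9) :=
  SimpleGraph.fromRel (fun a b =>
    (a.val < 4 ∧ b.val < 4) ∨
    (4 ≤ a.val ∧ a.val ≤ 7 ∧ (b.val = a.val - 4 ∨ b.val = (a.val - 4 + 1) % 4)) ∨
    (a = 8 ∧ (b = 0 ∨ b = 2)))

/-- A clique path of a graph `H`: a linear ordering `K_1, …, K_len` of all maximal
cliques of `H` such that for every vertex the cliques containing it are consecutive.
Indices outside `[1, len]` carry the empty set (sentinels). -/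
structure CliquePath (H : SimpleGraph V) where
  len : ℕ
  Kc : ℕ → Set V
  sentinel : ∀ i : ℕ, (i = 0 ∨ len < i) → Kc i = ∅
  maxclique : ∀ i : ℕ, 1 ≤ i → i ≤ len → IsMaxCliqueSet H (Kc i)
  surj : ∀ C : Set V, IsMaxCliqueSet H C → ∃ i, 1 ≤ i ∧ i ≤ len ∧ Kc i = C
  inj : ∀ i j : ℕ, 1 ≤ i → i ≤ len → 1 ≤ j → j ≤ len → Kc i = Kc j → i = j
  consec : ∀ (v : V) (i j k : ℕ), i ≤ j → j ≤ k → v ∈ Kc i → v ∈ Kc k → v ∈ Kc j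

/-- A module of a graph: every vertex outside is adjacent to all of it or none of it. -/
def GraphModule (H : SimpleGraph V) (M : Set V) : Prop :=
  ∀ u ∈ M, ∀ v ∈ M, ∀ x ∉ M, (H.Adj x u ↔ H.Adj x v)

/-- A graph is quasi-prime if every nontrivial module is a clique. -/
def QuasiPrime (H : SimpleGraph V) : Prop :=
  ∀ M : Set V, GraphModule H M → M ≠ Set.univ → ¬ M.Subsingleton → H.IsClique M

lemma sp_cover {G : SimpleGraph V} {K S : Set V} (h : IsSplitPartition G K S) :
    ∀ x : V, x ∈ K ∨ x ∈ S := by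
  intro x
  have : x ∈ K ∪ S := h.1 ▸ Set.mem_univ x
  exact this

lemma sp_compl {G : SimpleGraph V} {K S : Set V} (h : IsSplitPartition G K S) :
    S = Kᶜ := by
  ext x
  constructor
  · intro hx
    exact Set.disjoint_right.mp h.2.1 hx
  · intro hx
    rcases sp_cover h x with h' | h'
    · exact absurd h' hx
    · exact h'

lemma simplicial_of_mem_S {G : SimpleGraph V} {K S : Set V}
    (h : IsSplitPartition G K S) {s : V} (hs : s ∈ S) : IsSimplicial G s := by
  obtain ⟨hu, hd, hK, hS⟩ := h
  have hnb : ∀ u, G.Adj s u → u ∈ K := by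
    intro u hadj
    by_contra hu'
    have huS : u ∈ S := by
      rcases sp_cover ⟨hu, hd, hK, hS⟩ u with h' | h'
      · exact absurd h' hu'
      · exact h'
    exact hS hs huS (fun e => G.loopless.irrefl s (e ▸ hadj)) hadj
  intro a ha b hb hne
  simp only [closedNbhd, Set.mem_insert_iff, SimpleGraph.mem_neighborSet] at ha hb
  rcases ha with rfl | ha
  · rcases hb with rfl | hb
    · exact absurd rfl hne
    · exact hb
  · rcases hb with rfl | hb
    · exact ha.symm
    · exact hK (hnb a ha) (hnb b hb) hne

/-- A split graph `G` is ambiguous iff every maximal clique of `G`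
contains a simplicial vertex. -/
theorem statement6 {V : Type*} [Fintype V] (G : SimpleGraph V) (hG : IsSplitGraph G) :
    Ambiguous G ↔ ∀ C : Set V, IsMaxCliqueSet G C → ∃ v ∈ C, IsSimplicial G v := by
  obtain ⟨K, S, hP⟩ := hG
  obtain ⟨hunion, hdisj, hclK, hindS⟩ := hP
  have hP : IsSplitPartition G K S := ⟨hunion, hdisj, hclK, hindS⟩
  constructor
  · -- ambiguous → every maximal clique has a simplicial vertex
    rintro ⟨K₁, S₁, K₂, S₂, h1, h2, hne⟩ C hC
    by_cases hCS : ∃ s ∈ C, s ∈ S₁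
    · obtain ⟨s, hsC, hsS⟩ := hCS
      exact ⟨s, hsC, simplicial_of_mem_S h1 hsS⟩
    · push_neg at hCS
      have hsub : C ⊆ K₁ := by
        intro w hw
        rcases sp_cover h1 w with h' | h'
        · exact h'
        · exact absurd h' (hCS w hw)
      have hCeq : C = K₁ := hC.2 K₁ h1.2.2.1 hsub
      have hK12 : K₁ ≠ K₂ := by
        intro h
        apply hne
        have hS : S₁ = S₂ := by rw [sp_compl h1, sp_compl h2, h]
        rw [h, hS]
      by_cases hv : ∃ v ∈ K₁, v ∉ K₂
      · obtain ⟨v, hvK, hvK2⟩ := hv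
        have hvS2 : v ∈ S₂ := by
          rcases sp_cover h2 v with h' | h'
          · exact absurd h' hvK2
          · exact h'
        exact ⟨v, hCeq ▸ hvK, simplicial_of_mem_S h2 hvS2⟩
      · push_neg at hv
        have : C = K₂ := hC.2 K₂ h2.2.2.1 (fun x hx => hv x (hsub hx))
        exact absurd (hCeq ▸ this) hK12
  · -- every maximal clique has a simplicial vertex → ambiguous
    intro hsimp
    by_cases hw : ∃ w ∈ S, ∀ u ∈ K, G.Adj w u
    · -- K is not maximal: move `w` into the clique side
      obtain ⟨w, hwS, hwadj⟩ := hw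
      have hwK : w ∉ K := Set.disjoint_right.mp hdisj hwS
      refine ⟨K, S, insert w K, S \ {w}, hP, ⟨?_, ?_, ?_, ?_⟩, ?_⟩
      · ext x
        simp only [Set.mem_union, Set.mem_insert_iff, Set.mem_diff, Set.mem_singleton_iff,
          Set.mem_univ, iff_true]
        rcases sp_cover hP x with h' | h'
        · exact Or.inl (Or.inr h')
        · by_cases hxw : x = w
          · exact Or.inl (Or.inl hxw)
          · exact Or.inr ⟨h', hxw⟩
      · rw [Set.disjoint_left]
        rintro x hx ⟨hxS, hxw⟩
        rcases hx with rfl | hx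
        · exact hxw rfl
        · exact Set.disjoint_left.mp hdisj hx hxS
      · intro a ha b hb hne
        rcases ha with rfl | ha
        · rcases hb with rfl | hb
          · exact absurd rfl hne
          · exact hwadj b hb
        · rcases hb with rfl | hb
          · exact (hwadj a ha).symm
          · exact hclK ha hb hne
      · intro a ha b hb hne hadj
        exact hindS ha.1 hb.1 hne hadj
      · intro h
        have h1 : K = insert w K := congrArg Prod.fst h
        exact hwK (h1 ▸ Set.mem_insert w K)
    · -- K is a maximal clique: move a simplicial vertex out
      push_neg at hw
      have hmaxK : IsMaxCliqueSet G K := by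
        refine ⟨hclK, fun C' hC' hsub => ?_⟩
        refine Set.Subset.antisymm hsub (fun x hx => ?_)
        by_contra hxK
        have hxS : x ∈ S := by
          rcases sp_cover hP x with h' | h'
          · exact absurd h' hxK
          · exact h'
        obtain ⟨u, huK, hnadj⟩ := hw x hxS
        exact hnadj (hC' hx (hsub huK) (fun e => hxK (e ▸ huK)))
      obtain ⟨v, hvK, hvsimp⟩ := hsimp K hmaxK
      -- v is adjacent to no vertex of S
      have hvS : ∀ s ∈ S, ¬ G.Adj v s := by
        intro s hsS hadj
        have hsK : s ∉ K := Set.disjoint_right.mp hdisj hsS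
        have hclique : G.IsClique (insert s K) := by
          intro a ha b hb hne
          have mem : ∀ x ∈ insert s K, x ∈ closedNbhd G v := by
            intro x hx
            rcases hx with rfl | hx
            · exact Or.inr hadj
            · by_cases hxv : x = v
              · exact Or.inl hxv
              · exact Or.inr (hclK hvK hx (fun e => hxv e.symm))
          exact hvsimp (mem a ha) (mem b hb) hne
        have := hmaxK.2 (insert s K) hclique (Set.subset_insert s K)
        exact hsK (this ▸ Set.mem_insert s K)
      refine ⟨K, S, K \ {v}, insert v S, hP, ⟨?_, ?_, ?_, ?_⟩, ?_⟩
      · ext x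
        simp only [Set.mem_union, Set.mem_insert_iff, Set.mem_diff, Set.mem_singleton_iff,
          Set.mem_univ, iff_true]
        rcases sp_cover hP x with h' | h'
        · by_cases hxv : x = v
          · exact Or.inr (Or.inl hxv)
          · exact Or.inl ⟨h', hxv⟩
        · exact Or.inr (Or.inr h')
      · rw [Set.disjoint_left]
        rintro x ⟨hxK, hxv⟩ hx
        rcases hx with rfl | hx
        · exact hxv rfl
        · exact Set.disjoint_left.mp hdisj hxK hx
      · exact fun a ha b hb hne => hclK ha.1 hb.1 hne
      · intro a ha b hb hne hadj
        rcases ha with rfl | ha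
        · rcases hb with rfl | hb
          · exact hne rfl
          · exact hvS b hb hadj
        · rcases hb with rfl | hb
          · exact hvS a ha hadj.symm
          · exact hindS ha hb hne hadj
      · intro h
        have h1 : K = K \ {v} := congrArg Prod.fst h
        exact ((h1 ▸ hvK : v ∈ K \ {v})).2 rfl

end CAG
end

section
/- Let G be a split graph with split partition K ⊎ S and with no universal vertex. Then the auxiliary graph G^K contains an induced sun if and only if G contains an induced copy of the complement of the 3-sun. -/
namespace CAG

variable {V : Type*}

section Stmt10

variable {G : SimpleGraph V} {K S : Set V}

lemma mem_S_of_not_mem_K (h : IsSplitPartition G K S) {v : V} (hv : v ∉ K) : v ∈ S := by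
  have hm : v ∈ K ∪ S := h.1 ▸ Set.mem_univ v
  rcases hm with hm | hm
  · exact absurd hm hv
  · exact hm

lemma closedNbhd_subset_iff (h : IsSplitPartition G K S) {v u : V} (hv : v ∈ K) (hu : u ∉ K) :
    closedNbhd G u ⊆ closedNbhd G v ↔ G.Adj v u := by
  obtain ⟨hcov, hdisj, hcl, hind⟩ := h
  constructor
  · intro hsub
    have h1 : u ∈ closedNbhd G v := hsub (Set.mem_insert _ _)
    rcases h1 with h1 | h1
    · exact absurd (h1 ▸ hv) hu
    · exact h1
  · intro hadj w hw
    rcases hw with rfl | hw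
    · exact Or.inr hadj
    · by_cases hwK : w ∈ K
      · by_cases hwv : w = v
        · exact Or.inl hwv
        · exact Or.inr (hcl hv hwK (fun e => hwv e.symm) : G.Adj v w)
      · have huS : u ∈ S := mem_S_of_not_mem_K ⟨hcov, hdisj, hcl, hind⟩ hu
        have hwS : w ∈ S := mem_S_of_not_mem_K ⟨hcov, hdisj, hcl, hind⟩ hwK
        exact absurd hw (hind huS hwS (G.ne_of_adj hw))

lemma ks_adj (h : IsSplitPartition G K S) {v u : V} (hv : v ∈ K) (hu : u ∉ K) :
    (auxGraph G K).Adj v u ↔ ¬ G.Adj v u := by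
  have hne : v ≠ u := fun e => hu (e ▸ hv)
  constructor
  · rintro ⟨-, hA⟩
    rcases hA with ⟨-, huK, -⟩ | ⟨hvK, -, -⟩ | ⟨-, -, hns⟩ | ⟨huK, -, -⟩
    · exact absurd huK hu
    · exact absurd hv hvK
    · exact fun hadj => hns ((closedNbhd_subset_iff h hv hu).2 hadj)
    · exact absurd huK hu
  · intro hnadj
    exact ⟨hne, Or.inr <| Or.inr <| Or.inl
      ⟨hv, hu, fun hs => hnadj ((closedNbhd_subset_iff h hv hu).1 hs)⟩⟩

lemma ss_not_adj (h : IsSplitPartition G K S) {u v : V} (hu : u ∉ K) (hv : v ∉ K) :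
    ¬ (auxGraph G K).Adj u v := by
  rintro ⟨hne, hA⟩
  rcases hA with ⟨h1, -, -⟩ | ⟨-, -, h3⟩ | ⟨h1, -, -⟩ | ⟨h1, -, -⟩
  · exact hu h1
  · exact h.2.2.2 (mem_S_of_not_mem_K h hu) (mem_S_of_not_mem_K h hv) hne h3
  · exact hu h1
  · exact hv h1

lemma kk_adj (h : IsSplitPartition G K S) {u v : V} (hu : u ∈ K) (hv : v ∈ K) (hne : u ≠ v) :
    (auxGraph G K).Adj u v ↔ ∃ s, s ∉ K ∧ ¬ G.Adj u s ∧ ¬ G.Adj v s := by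
  obtain ⟨hcov, hdisj, hcl, hind⟩ := h
  constructor
  · rintro ⟨-, hA⟩
    have hNe : G.neighborSet u ∪ G.neighborSet v ≠ Set.univ := by
      rcases hA with ⟨-, -, h3⟩ | ⟨h1, -, -⟩ | ⟨-, h2, -⟩ | ⟨-, h2, -⟩
      · exact h3
      · exact absurd hu h1
      · exact absurd hv h2
      · exact absurd hu h2
    obtain ⟨s, hs⟩ : ∃ s, s ∉ G.neighborSet u ∪ G.neighborSet v := by
      by_contra hc
      push_neg at hc
      exact hNe (Set.eq_univ_of_forall hc)
    rw [Set.mem_union] at hs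
    push_neg at hs
    obtain ⟨hs1, hs2⟩ := hs
    refine ⟨s, ?_, hs1, hs2⟩
    intro hsK
    rcases eq_or_ne s u with rfl | hsu
    · exact hs2 (hcl hv hu hne.symm)
    rcases eq_or_ne s v with rfl | hsv
    · exact hs1 (hcl hu hv hne)
    · exact hs1 (hcl hu hsK (fun e => hsu e.symm))
  · rintro ⟨s, hsK, hs1, hs2⟩
    refine ⟨hne, Or.inl ⟨hu, hv, ?_⟩⟩
    intro hE
    have hm : s ∈ G.neighborSet u ∪ G.neighborSet v := hE ▸ Set.mem_univ s
    rcases hm with hm | hm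
    · exact hs1 hm
    · exact hs2 hm

lemma kk_not_adj {u v : V} (hu : u ∈ K) (hv : v ∈ K) (hne : u ≠ v)
    (hna : ¬ (auxGraph G K).Adj u v) (w : V) : G.Adj u w ∨ G.Adj v w := by
  have hE : G.neighborSet u ∪ G.neighborSet v = Set.univ := by
    by_contra hc
    exact hna ⟨hne, Or.inl ⟨hu, hv, hc⟩⟩
  have hm : w ∈ G.neighborSet u ∪ G.neighborSet v := by rw [hE]; trivial
  exact hm

/-- The combinatorial content of an induced net (= complement of the 3-sun) in a
split graph: a triangle in `K` together with three pendant vertices in `S`. -/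
def NetFacts (G : SimpleGraph V) (K : Set V) : Prop :=
  ∃ t₁ t₂ t₃ p₁ p₂ p₃ : V,
    t₁ ∈ K ∧ t₂ ∈ K ∧ t₃ ∈ K ∧ p₁ ∉ K ∧ p₂ ∉ K ∧ p₃ ∉ K ∧
    t₁ ≠ t₂ ∧ t₁ ≠ t₃ ∧ t₂ ≠ t₃ ∧
    G.Adj t₁ p₁ ∧ G.Adj t₂ p₂ ∧ G.Adj t₃ p₃ ∧
    ¬ G.Adj t₁ p₂ ∧ ¬ G.Adj t₁ p₃ ∧ ¬ G.Adj t₂ p₁ ∧ ¬ G.Adj t₂ p₃ ∧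
    ¬ G.Adj t₃ p₁ ∧ ¬ G.Adj t₃ p₂

end Stmt10

section Stmt10b

variable {G : SimpleGraph V} {K S : Set V}

lemma net_of_netFacts (h : IsSplitPartition G K S) (hN : NetFacts G K) :
    InducedCopy (sunGraph 3)ᶜ G := by
  obtain ⟨t₁, t₂, t₃, p₁, p₂, p₃, ht₁, ht₂, ht₃, hp₁, hp₂, hp₃, h12, h13, h23,
    a1, a2, a3, n12, n13, n21, n23, n31, n32⟩ := hN
  obtain ⟨hcov, hdisj, hcl, hind⟩ := h
  have hs₁ : p₁ ∈ S := mem_S_of_not_mem_K ⟨hcov, hdisj, hcl, hind⟩ hp₁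
  have hs₂ : p₂ ∈ S := mem_S_of_not_mem_K ⟨hcov, hdisj, hcl, hind⟩ hp₂
  have hs₃ : p₃ ∈ S := mem_S_of_not_mem_K ⟨hcov, hdisj, hcl, hind⟩ hp₃
  -- triangle edges
  have e12 : G.Adj t₁ t₂ := hcl ht₁ ht₂ h12
  have e13 : G.Adj t₁ t₃ := hcl ht₁ ht₃ h13
  have e23 : G.Adj t₂ t₃ := hcl ht₂ ht₃ h23
  -- pendant distinctness
  have q12 : p₁ ≠ p₂ := fun e => n12 (e ▸ a1)
  have q13 : p₁ ≠ p₃ := fun e => n13 (e ▸ a1)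
  have q23 : p₂ ≠ p₃ := fun e => n23 (e ▸ a2)
  -- pendant non-edges
  have m12 : ¬ G.Adj p₁ p₂ := hind hs₁ hs₂ q12
  have m13 : ¬ G.Adj p₁ p₃ := hind hs₁ hs₃ q13
  have m23 : ¬ G.Adj p₂ p₃ := hind hs₂ hs₃ q23
  -- t/p distinctness
  have r11 : t₁ ≠ p₁ := fun e => hp₁ (e ▸ ht₁)
  have r12 : t₁ ≠ p₂ := fun e => hp₂ (e ▸ ht₁)
  have r13 : t₁ ≠ p₃ := fun e => hp₃ (e ▸ ht₁)
  have r21 : t₂ ≠ p₁ := fun e => hp₁ (e ▸ ht₂)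
  have r22 : t₂ ≠ p₂ := fun e => hp₂ (e ▸ ht₂)
  have r23 : t₂ ≠ p₃ := fun e => hp₃ (e ▸ ht₂)
  have r31 : t₃ ≠ p₁ := fun e => hp₁ (e ▸ ht₃)
  have r32 : t₃ ≠ p₂ := fun e => hp₂ (e ▸ ht₃)
  have r33 : t₃ ≠ p₃ := fun e => hp₃ (e ▸ ht₃)
  -- the embedding: inr j ↦ tⱼ₊₁ ; inl i ↦ p_{(i+1)%3+1}, so that
  -- inl i is adjacent exactly to inr ((i+1)%3)
  let f : Fin 3 ⊕ Fin 3 → V := fun x =>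
    match x with
    | Sum.inr ⟨0, _⟩ => t₁
    | Sum.inr ⟨1, _⟩ => t₂
    | Sum.inr ⟨2, _⟩ => t₃
    | Sum.inl ⟨0, _⟩ => p₂
    | Sum.inl ⟨1, _⟩ => p₃
    | Sum.inl ⟨2, _⟩ => p₁
  have hinj : Function.Injective f := by
    rintro (a | a) (b | b) hab <;> fin_cases a <;> fin_cases b <;>
      simp_all [f]
  refine ⟨⟨⟨f, hinj⟩, ?_⟩⟩
  rintro (a | a) (b | b) <;> fin_cases a <;> fin_cases b <;>
    simp_all [f, sunGraph, SimpleGraph.fromRel_adj, SimpleGraph.compl_adj, G.adj_comm,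
      eq_comm]

end Stmt10b

section Stmt10c

variable {G : SimpleGraph V} {K S : Set V}

lemma sun_of_netFacts (h : IsSplitPartition G K S) (hN : NetFacts G K) :
    InducedCopy sunF (auxGraph G K) := by
  obtain ⟨t₁, t₂, t₃, p₁, p₂, p₃, ht₁, ht₂, ht₃, hp₁, hp₂, hp₃, h12, h13, h23,
    a1, a2, a3, n12, n13, n21, n23, n31, n32⟩ := hN
  -- triangle of the sun in the auxiliary graph
  have A12 : (auxGraph G K).Adj t₁ t₂ := (kk_adj h ht₁ ht₂ h12).2 ⟨p₃, hp₃, n13, n23⟩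
  have A13 : (auxGraph G K).Adj t₁ t₃ := (kk_adj h ht₁ ht₃ h13).2 ⟨p₂, hp₂, n12, n32⟩
  have A23 : (auxGraph G K).Adj t₂ t₃ := (kk_adj h ht₂ ht₃ h23).2 ⟨p₁, hp₁, n21, n31⟩
  have A21 := A12.symm; have A31 := A13.symm; have A32 := A23.symm
  -- K-S adjacencies in the auxiliary graph
  have B21 : (auxGraph G K).Adj t₂ p₁ := (ks_adj h ht₂ hp₁).2 n21
  have B31 : (auxGraph G K).Adj t₃ p₁ := (ks_adj h ht₃ hp₁).2 n31
  have B12 : (auxGraph G K).Adj t₁ p₂ := (ks_adj h ht₁ hp₂).2 n12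
  have B32 : (auxGraph G K).Adj t₃ p₂ := (ks_adj h ht₃ hp₂).2 n32
  have B13 : (auxGraph G K).Adj t₁ p₃ := (ks_adj h ht₁ hp₃).2 n13
  have B23 : (auxGraph G K).Adj t₂ p₃ := (ks_adj h ht₂ hp₃).2 n23
  have B21' := B21.symm; have B31' := B31.symm; have B12' := B12.symm
  have B32' := B32.symm; have B13' := B13.symm; have B23' := B23.symm
  -- K-S non-adjacencies
  have N1 : ¬ (auxGraph G K).Adj t₁ p₁ := fun hh => (ks_adj h ht₁ hp₁).1 hh a1
  have N2 : ¬ (auxGraph G K).Adj t₂ p₂ := fun hh => (ks_adj h ht₂ hp₂).1 hh a2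
  have N3 : ¬ (auxGraph G K).Adj t₃ p₃ := fun hh => (ks_adj h ht₃ hp₃).1 hh a3
  have N1' : ¬ (auxGraph G K).Adj p₁ t₁ := fun hh => N1 hh.symm
  have N2' : ¬ (auxGraph G K).Adj p₂ t₂ := fun hh => N2 hh.symm
  have N3' : ¬ (auxGraph G K).Adj p₃ t₃ := fun hh => N3 hh.symm
  -- S-S non-adjacencies
  have P12 : ¬ (auxGraph G K).Adj p₁ p₂ := ss_not_adj h hp₁ hp₂
  have P13 : ¬ (auxGraph G K).Adj p₁ p₃ := ss_not_adj h hp₁ hp₃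
  have P23 : ¬ (auxGraph G K).Adj p₂ p₃ := ss_not_adj h hp₂ hp₃
  have P21 : ¬ (auxGraph G K).Adj p₂ p₁ := ss_not_adj h hp₂ hp₁
  have P31 : ¬ (auxGraph G K).Adj p₃ p₁ := ss_not_adj h hp₃ hp₁
  have P32 : ¬ (auxGraph G K).Adj p₃ p₂ := ss_not_adj h hp₃ hp₂
  -- irreflexivity
  have I1 : ¬ (auxGraph G K).Adj t₁ t₁ := fun hh => hh.1 rfl
  have I2 : ¬ (auxGraph G K).Adj t₂ t₂ := fun hh => hh.1 rfl
  have I3 : ¬ (auxGraph G K).Adj t₃ t₃ := fun hh => hh.1 rfl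
  have I4 : ¬ (auxGraph G K).Adj p₁ p₁ := fun hh => hh.1 rfl
  have I5 : ¬ (auxGraph G K).Adj p₂ p₂ := fun hh => hh.1 rfl
  have I6 : ¬ (auxGraph G K).Adj p₃ p₃ := fun hh => hh.1 rfl
  -- distinctness
  have q12 : p₁ ≠ p₂ := fun e => n12 (e ▸ a1)
  have q13 : p₁ ≠ p₃ := fun e => n13 (e ▸ a1)
  have q23 : p₂ ≠ p₃ := fun e => n23 (e ▸ a2)
  have r11 : t₁ ≠ p₁ := fun e => hp₁ (e ▸ ht₁)
  have r12 : t₁ ≠ p₂ := fun e => hp₂ (e ▸ ht₁)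
  have r13 : t₁ ≠ p₃ := fun e => hp₃ (e ▸ ht₁)
  have r21 : t₂ ≠ p₁ := fun e => hp₁ (e ▸ ht₂)
  have r22 : t₂ ≠ p₂ := fun e => hp₂ (e ▸ ht₂)
  have r23 : t₂ ≠ p₃ := fun e => hp₃ (e ▸ ht₂)
  have r31 : t₃ ≠ p₁ := fun e => hp₁ (e ▸ ht₃)
  have r32 : t₃ ≠ p₂ := fun e => hp₂ (e ▸ ht₃)
  have r33 : t₃ ≠ p₃ := fun e => hp₃ (e ▸ ht₃)
  -- the embedding: 0,1,2 ↦ t₁,t₂,t₃ ; 3 ↦ p₃, 4 ↦ p₁, 5 ↦ p₂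
  let f : Fin 6 → V := fun x =>
    match x with
    | ⟨0, _⟩ => t₁
    | ⟨1, _⟩ => t₂
    | ⟨2, _⟩ => t₃
    | ⟨3, _⟩ => p₃
    | ⟨4, _⟩ => p₁
    | ⟨5, _⟩ => p₂
  have hinj : Function.Injective f := by
    intro a b hab
    fin_cases a <;> fin_cases b <;> simp only [f] at hab <;>
      first | rfl | exact absurd hab ‹_› | exact absurd hab.symm ‹_›
  refine ⟨⟨⟨f, hinj⟩, ?_⟩⟩
  intro a b
  fin_cases a <;> fin_cases b <;> simp only [f] <;>
    first
      | exact iff_of_true ‹_› (by simp [sunF, SimpleGraph.fromRel_adj])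
      | exact iff_of_false ‹_› (by simp [sunF, SimpleGraph.fromRel_adj])

end Stmt10c

section Stmt10d

variable {G : SimpleGraph V} {K S : Set V}

/-- A triangle vertex of a sun in `G^K` must lie in `K`. -/
lemma tri_mem_K (h : IsSplitPartition G K S) {A B W : V}
    (hAB : (auxGraph G K).Adj A B) (hWA : (auxGraph G K).Adj W A)
    (hWB : ¬ (auxGraph G K).Adj W B) (hWneB : W ≠ B) : A ∈ K := by
  by_contra hA
  have hB : B ∈ K := by
    by_contra hB
    exact ss_not_adj h hA hB hAB
  have h1 : ¬ G.Adj B A := (ks_adj h hB hA).1 hAB.symm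
  have hW : W ∈ K := by
    by_contra hW
    exact ss_not_adj h hW hA hWA
  have h2 : ¬ G.Adj W A := (ks_adj h hW hA).1 hWA
  rcases kk_not_adj hW hB hWneB hWB A with hc | hc
  · exact h2 hc
  · exact h1 hc

/-- From a degree-two vertex `w` of a sun in `G^K` whose triangle `{u,v,t}` lies in
`K` (with `w` adjacent to `u, v` and not to `t`), we obtain either a full net in `G`
or a vertex of `S` adjacent exactly to `t` among `{u,v,t}`. -/
lemma pendant_or_net (h : IsSplitPartition G K S) {u v t w : V}
    (hu : u ∈ K) (hv : v ∈ K) (ht : t ∈ K)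
    (huv : u ≠ v) (hwu : w ≠ u) (hwv : w ≠ v) (hwt : w ≠ t)
    (auv : (auxGraph G K).Adj u v)
    (awu : (auxGraph G K).Adj w u) (awv : (auxGraph G K).Adj w v)
    (nwt : ¬ (auxGraph G K).Adj w t) :
    NetFacts G K ∨ ∃ p, p ∉ K ∧ G.Adj t p ∧ ¬ G.Adj u p ∧ ¬ G.Adj v p := by
  by_cases hwK : w ∈ K
  · obtain ⟨s₁, hs₁K, hs₁w, hs₁u⟩ := (kk_adj h hwK hu hwu).1 awu
    obtain ⟨s₂, hs₂K, hs₂w, hs₂v⟩ := (kk_adj h hwK hv hwv).1 awv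
    have hcover := kk_not_adj hwK ht hwt nwt
    have hts₁ : G.Adj t s₁ := (hcover s₁).resolve_left hs₁w
    have hts₂ : G.Adj t s₂ := (hcover s₂).resolve_left hs₂w
    by_cases hvs₁ : G.Adj v s₁
    · by_cases hus₂ : G.Adj u s₂
      · obtain ⟨s₃, hs₃K, hs₃u, hs₃v⟩ := (kk_adj h hu hv huv).1 auv
        by_cases hts₃ : G.Adj t s₃
        · exact Or.inr ⟨s₃, hs₃K, hts₃, hs₃u, hs₃v⟩
        · have hws₃ : G.Adj w s₃ := (hcover s₃).resolve_right hts₃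
          exact Or.inl ⟨w, u, v, s₃, s₂, s₁, hwK, hu, hv, hs₃K, hs₂K, hs₁K,
            hwu, hwv, huv, hws₃, hus₂, hvs₁,
            hs₂w, hs₁w, hs₃u, hs₁u, hs₃v, hs₂v⟩
      · exact Or.inr ⟨s₂, hs₂K, hts₂, hus₂, hs₂v⟩
    · exact Or.inr ⟨s₁, hs₁K, hts₁, hs₁u, hvs₁⟩
  · have h1 : ¬ G.Adj u w := (ks_adj h hu hwK).1 awu.symm
    have h2 : ¬ G.Adj v w := (ks_adj h hv hwK).1 awv.symm
    have h3 : G.Adj t w := by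
      by_contra hc
      exact nwt ((ks_adj h ht hwK).2 hc).symm
    exact Or.inr ⟨w, hwK, h3, h1, h2⟩

/-- From an induced sun in `G^K`, extract the facts of a net in `G`. -/
lemma netFacts_of_sun (h : IsSplitPartition G K S)
    (hS : InducedCopy sunF (auxGraph G K)) : NetFacts G K := by
  obtain ⟨e⟩ := hS
  have adj : ∀ i j : Fin 6, sunF.Adj i j → (auxGraph G K).Adj (e i) (e j) :=
    fun i j hij => e.map_rel_iff.2 hij
  have nadj : ∀ i j : Fin 6, ¬ sunF.Adj i j → ¬ (auxGraph G K).Adj (e i) (e j) :=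
    fun i j hij hc => hij (e.map_rel_iff.1 hc)
  have ne : ∀ i j : Fin 6, i ≠ j → e i ≠ e j := fun i j hij => e.injective.ne hij
  -- the triangle lies in K
  have hA : e 0 ∈ K := tri_mem_K h
    (adj 0 2 (by simp [sunF, SimpleGraph.fromRel_adj]))
    (adj 3 0 (by simp [sunF, SimpleGraph.fromRel_adj]))
    (nadj 3 2 (by simp [sunF, SimpleGraph.fromRel_adj]))
    (ne 3 2 (by decide))
  have hB : e 1 ∈ K := tri_mem_K h
    (adj 1 2 (by simp [sunF, SimpleGraph.fromRel_adj]))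
    (adj 3 1 (by simp [sunF, SimpleGraph.fromRel_adj]))
    (nadj 3 2 (by simp [sunF, SimpleGraph.fromRel_adj]))
    (ne 3 2 (by decide))
  have hC : e 2 ∈ K := tri_mem_K h
    (adj 2 0 (by simp [sunF, SimpleGraph.fromRel_adj]))
    (adj 4 2 (by simp [sunF, SimpleGraph.fromRel_adj]))
    (nadj 4 0 (by simp [sunF, SimpleGraph.fromRel_adj]))
    (ne 4 0 (by decide))
  -- apply the pendant lemma to the three degree-two vertices
  rcases pendant_or_net h hA hB hC (ne 0 1 (by decide)) (ne 3 0 (by decide))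
      (ne 3 1 (by decide)) (ne 3 2 (by decide))
      (adj 0 1 (by simp [sunF, SimpleGraph.fromRel_adj]))
      (adj 3 0 (by simp [sunF, SimpleGraph.fromRel_adj]))
      (adj 3 1 (by simp [sunF, SimpleGraph.fromRel_adj]))
      (nadj 3 2 (by simp [sunF, SimpleGraph.fromRel_adj])) with hnet | ⟨pC, hpCK, cC, cCA, cCB⟩
  · exact hnet
  rcases pendant_or_net h hB hC hA (ne 1 2 (by decide)) (ne 4 1 (by decide))
      (ne 4 2 (by decide)) (ne 4 0 (by decide))
      (adj 1 2 (by simp [sunF, SimpleGraph.fromRel_adj]))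
      (adj 4 1 (by simp [sunF, SimpleGraph.fromRel_adj]))
      (adj 4 2 (by simp [sunF, SimpleGraph.fromRel_adj]))
      (nadj 4 0 (by simp [sunF, SimpleGraph.fromRel_adj])) with hnet | ⟨pA, hpAK, cA, cAB, cAC⟩
  · exact hnet
  rcases pendant_or_net h hA hC hB (ne 0 2 (by decide)) (ne 5 0 (by decide))
      (ne 5 2 (by decide)) (ne 5 1 (by decide))
      (adj 0 2 (by simp [sunF, SimpleGraph.fromRel_adj]))
      (adj 5 0 (by simp [sunF, SimpleGraph.fromRel_adj]))
      (adj 5 2 (by simp [sunF, SimpleGraph.fromRel_adj]))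
      (nadj 5 1 (by simp [sunF, SimpleGraph.fromRel_adj])) with hnet | ⟨pB, hpBK, cB, cBA, cBC⟩
  · exact hnet
  exact ⟨e 0, e 1, e 2, pA, pB, pC, hA, hB, hC, hpAK, hpBK, hpCK,
    ne 0 1 (by decide), ne 0 2 (by decide), ne 1 2 (by decide),
    cA, cB, cC, cBA, cCA, cAB, cCB, cAC, cBC⟩

/-- From an induced net in `G`, extract the net facts. -/
lemma netFacts_of_net (h : IsSplitPartition G K S)
    (hN : InducedCopy (sunGraph 3)ᶜ G) : NetFacts G K := by
  obtain ⟨e⟩ := hN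
  have adj : ∀ i j : Fin 3 ⊕ Fin 3, (sunGraph 3)ᶜ.Adj i j → G.Adj (e i) (e j) :=
    fun i j hij => e.map_rel_iff.2 hij
  have nadj : ∀ i j : Fin 3 ⊕ Fin 3, ¬ (sunGraph 3)ᶜ.Adj i j → ¬ G.Adj (e i) (e j) :=
    fun i j hij hc => hij (e.map_rel_iff.1 hc)
  -- triangle edges
  have tt01 : G.Adj (e (Sum.inr 0)) (e (Sum.inr 1)) := adj _ _ (by
    simp [sunGraph, SimpleGraph.fromRel_adj, SimpleGraph.compl_adj])
  have tt02 : G.Adj (e (Sum.inr 0)) (e (Sum.inr 2)) := adj _ _ (by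
    simp [sunGraph, SimpleGraph.fromRel_adj, SimpleGraph.compl_adj])
  have tt12 : G.Adj (e (Sum.inr 1)) (e (Sum.inr 2)) := adj _ _ (by
    simp [sunGraph, SimpleGraph.fromRel_adj, SimpleGraph.compl_adj])
  -- pendant edges: Q i is adjacent exactly to T ((i+1) % 3)
  have a01 : G.Adj (e (Sum.inl 0)) (e (Sum.inr 1)) := adj _ _ (by
    simp [sunGraph, SimpleGraph.fromRel_adj, SimpleGraph.compl_adj])
  have a12 : G.Adj (e (Sum.inl 1)) (e (Sum.inr 2)) := adj _ _ (by
    simp [sunGraph, SimpleGraph.fromRel_adj, SimpleGraph.compl_adj])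
  have a20 : G.Adj (e (Sum.inl 2)) (e (Sum.inr 0)) := adj _ _ (by
    simp [sunGraph, SimpleGraph.fromRel_adj, SimpleGraph.compl_adj])
  have n00 : ¬ G.Adj (e (Sum.inl 0)) (e (Sum.inr 0)) := nadj _ _ (by
    simp [sunGraph, SimpleGraph.fromRel_adj, SimpleGraph.compl_adj])
  have n02 : ¬ G.Adj (e (Sum.inl 0)) (e (Sum.inr 2)) := nadj _ _ (by
    simp [sunGraph, SimpleGraph.fromRel_adj, SimpleGraph.compl_adj])
  have n10 : ¬ G.Adj (e (Sum.inl 1)) (e (Sum.inr 0)) := nadj _ _ (by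
    simp [sunGraph, SimpleGraph.fromRel_adj, SimpleGraph.compl_adj])
  have n11 : ¬ G.Adj (e (Sum.inl 1)) (e (Sum.inr 1)) := nadj _ _ (by
    simp [sunGraph, SimpleGraph.fromRel_adj, SimpleGraph.compl_adj])
  have n21 : ¬ G.Adj (e (Sum.inl 2)) (e (Sum.inr 1)) := nadj _ _ (by
    simp [sunGraph, SimpleGraph.fromRel_adj, SimpleGraph.compl_adj])
  have n22 : ¬ G.Adj (e (Sum.inl 2)) (e (Sum.inr 2)) := nadj _ _ (by
    simp [sunGraph, SimpleGraph.fromRel_adj, SimpleGraph.compl_adj])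
  -- distinctness
  have dq0t0 : e (Sum.inl 0) ≠ e (Sum.inr 0) := e.injective.ne (by simp)
  have dq0t2 : e (Sum.inl 0) ≠ e (Sum.inr 2) := e.injective.ne (by simp)
  have dq1t0 : e (Sum.inl 1) ≠ e (Sum.inr 0) := e.injective.ne (by simp)
  have dq1t1 : e (Sum.inl 1) ≠ e (Sum.inr 1) := e.injective.ne (by simp)
  have dq2t1 : e (Sum.inl 2) ≠ e (Sum.inr 1) := e.injective.ne (by simp)
  have dq2t2 : e (Sum.inl 2) ≠ e (Sum.inr 2) := e.injective.ne (by simp)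
  have dt01 : e (Sum.inr 0) ≠ e (Sum.inr 1) := e.injective.ne (by simp)
  have dt02 : e (Sum.inr 0) ≠ e (Sum.inr 2) := e.injective.ne (by simp)
  have dt12 : e (Sum.inr 1) ≠ e (Sum.inr 2) := e.injective.ne (by simp)
  -- no edge of G joins two vertices outside K
  have hTnotS : ∀ X Y : V, G.Adj X Y → X ∉ K → Y ∉ K → False := by
    intro X Y hXY hX hY
    exact h.2.2.2 (mem_S_of_not_mem_K h hX) (mem_S_of_not_mem_K h hY) hXY.ne hXY
  -- the pendants lie outside K
  have hq0 : e (Sum.inl 0) ∉ K := by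
    intro hq
    have h0 : e (Sum.inr 0) ∉ K := fun hT => n00 (h.2.2.1 hq hT dq0t0)
    have h2 : e (Sum.inr 2) ∉ K := fun hT => n02 (h.2.2.1 hq hT dq0t2)
    exact hTnotS _ _ tt02 h0 h2
  have hq1 : e (Sum.inl 1) ∉ K := by
    intro hq
    have h0 : e (Sum.inr 0) ∉ K := fun hT => n10 (h.2.2.1 hq hT dq1t0)
    have h1 : e (Sum.inr 1) ∉ K := fun hT => n11 (h.2.2.1 hq hT dq1t1)
    exact hTnotS _ _ tt01 h0 h1
  have hq2 : e (Sum.inl 2) ∉ K := by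
    intro hq
    have h1 : e (Sum.inr 1) ∉ K := fun hT => n21 (h.2.2.1 hq hT dq2t1)
    have h2 : e (Sum.inr 2) ∉ K := fun hT => n22 (h.2.2.1 hq hT dq2t2)
    exact hTnotS _ _ tt12 h1 h2
  -- the triangle lies in K
  have hT0 : e (Sum.inr 0) ∈ K := by
    by_contra h0
    exact hTnotS _ _ a20.symm h0 hq2
  have hT1 : e (Sum.inr 1) ∈ K := by
    by_contra h1
    exact hTnotS _ _ a01.symm h1 hq0
  have hT2 : e (Sum.inr 2) ∈ K := by
    by_contra h2
    exact hTnotS _ _ a12.symm h2 hq1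
  exact ⟨e (Sum.inr 0), e (Sum.inr 1), e (Sum.inr 2),
    e (Sum.inl 2), e (Sum.inl 0), e (Sum.inl 1),
    hT0, hT1, hT2, hq2, hq0, hq1, dt01, dt02, dt12,
    a20.symm, a01.symm, a12.symm,
    fun c => n00 c.symm, fun c => n10 c.symm, fun c => n21 c.symm,
    fun c => n11 c.symm, fun c => n22 c.symm, fun c => n02 c.symm⟩

end Stmt10d

/-- Let `G` be a split graph with split partition `K ⊎ S` and no
universal vertex.  Then `G^K` contains an induced sun iff `G` contains an induced
copy of the complement of the 3-sun. -/
theorem statement10 {V : Type*} [Fintype V] (G : SimpleGraph V) (K S : Set V)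
    (hKS : IsSplitPartition G K S) (hu : ¬ HasUniversalVertex G) :
    InducedCopy sunF (auxGraph G K) ↔ InducedCopy (sunGraph 3)ᶜ G := by
  constructor
  · intro hs
    exact net_of_netFacts hKS (netFacts_of_sun hKS hs)
  · intro hn
    exact sun_of_netFacts hKS (netFacts_of_net hKS hn)

end CAG
end

section
/- Let G be a split graph with split partition K ⊎ S and with no universal vertex, let s ∈ S, and let H = G^{N[s]}, K_s = N_G(s), K_o = K \ N_G(s). Then H satisfies condition (♯) (with respect to the clique N[s]) if and only if H is an interval graph admitting a clique path ⟨K_1,…,K_ℓ⟩ such that N_H(v) ∩ K_o ⊆ K_{lk(v)} ∪ K_{rk(v)} for every v ∈ K_s. -/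
namespace CAG

variable {V : Type*}

section Aux
variable {W : Type*}

lemma exists_maxCliqueSet_superset [Finite W] (H : SimpleGraph W) {C : Set W}
    (hC : H.IsClique C) : ∃ D, IsMaxCliqueSet H D ∧ C ⊆ D := by
  have hfin : {D : Set W | H.IsClique D ∧ C ⊆ D}.Finite := Set.toFinite _
  obtain ⟨D, hCD, hmax⟩ := hfin.exists_le_maximal (a := C) ⟨hC, subset_rfl⟩
  exact ⟨D, ⟨hmax.1.1, fun D' hclique hsub => hmax.eq_of_le ⟨hclique, hCD.trans hsub⟩ hsub⟩, hCD⟩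

lemma maxCliqueSet_nonempty [Nonempty W] {H : SimpleGraph W} {C : Set W}
    (hC : IsMaxCliqueSet H C) : C.Nonempty := by
  rcases Set.eq_empty_or_nonempty C with h | h
  · obtain ⟨v⟩ := ‹Nonempty W›
    have := hC.2 {v} (SimpleGraph.isClique_singleton v) (by simp [h])
    exact ⟨v, by rw [this]; exact Set.mem_singleton v⟩
  · exact h

lemma mem_maxCliqueSet_of_adj [Finite W] {H : SimpleGraph W} {C : Set W}
    (hC : IsMaxCliqueSet H C) {v : W} (hadj : ∀ w ∈ C, w ≠ v → H.Adj v w) : v ∈ C := by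
  have hclique : H.IsClique (insert v C) :=
    hC.1.insert (fun b hb hne => hadj b hb hne.symm)
  have := hC.2 (insert v C) hclique (Set.subset_insert _ _)
  rw [this]; exact Set.mem_insert _ _

lemma exists_cliquePath_of_model [Fintype W] [Nonempty W] (H : SimpleGraph W)
    (M : IntervalModel H) :
    ∃ (cp : CliquePath H) (pt : ℕ → ℝ),
      (∀ i j, 1 ≤ i → i ≤ j → j ≤ cp.len → pt i ≤ pt j) ∧
      (∀ i, 1 ≤ i → i ≤ cp.len → ∀ v ∈ cp.Kc i, pt i ∈ M.ival v) ∧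
      (∀ i, 1 ≤ i → i ≤ cp.len → ∀ v, pt i ∈ M.ival v → v ∈ cp.Kc i) := by
  classical
  set p : Set W → ℝ := fun C => sSup (M.lo '' C) with hp
  have hloIval : ∀ v, M.lo v ∈ M.ival v := fun v => ⟨le_refl _, M.lo_le_hi v⟩
  have hloleb : ∀ {C : Set W}, H.IsClique C → ∀ {w v : W}, w ∈ C → v ∈ C →
      M.lo w ≤ M.hi v := by
    intro C hC w v hw hv
    rcases eq_or_ne w v with rfl | hne
    · exact M.lo_le_hi w
    · obtain ⟨x, hxw, hxv⟩ := (M.adj_iff w v hne).1 (hC hw hv hne)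
      exact le_trans hxw.1 hxv.2
  have hL1 : ∀ C, IsMaxCliqueSet H C → ∀ v ∈ C, p C ∈ M.ival v := by
    intro C hC v hv
    constructor
    · exact le_csSup (Set.toFinite _).bddAbove ⟨v, hv, rfl⟩
    · exact csSup_le ⟨M.lo v, v, hv, rfl⟩ (by rintro y ⟨w, hw, rfl⟩; exact hloleb hC.1 hw hv)
  have hL2 : ∀ C, IsMaxCliqueSet H C → ∀ v, p C ∈ M.ival v → v ∈ C := by
    intro C hC v hpv
    refine mem_maxCliqueSet_of_adj hC (fun w hw hne => ?_)
    exact (M.adj_iff v w hne.symm).2 ⟨p C, hpv, hL1 C hC w hw⟩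
  have hL3 : ∀ C C', IsMaxCliqueSet H C → IsMaxCliqueSet H C' → p C = p C' → C = C' := by
    intro C C' hC hC' hpe
    ext v
    constructor
    · intro hv; exact hL2 C' hC' v (hpe ▸ hL1 C hC v hv)
    · intro hv; exact hL2 C hC v (hpe.symm ▸ hL1 C' hC' v hv)
  set MC : Finset (Set W) := Set.toFinset {C | IsMaxCliqueSet H C} with hMC
  have hMCmem : ∀ C, C ∈ MC ↔ IsMaxCliqueSet H C := by
    intro C; rw [hMC, Set.mem_toFinset]; rfl
  set P : Finset ℝ := MC.image p with hP
  set n := P.card with hn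
  set oi : Fin n ≃o {x // x ∈ P} := P.orderIsoOfFin rfl with hoi
  have hval : ∀ k : Fin n,
      ∃! C, C ∈ MC ∧ p C = ((oi k : {x // x ∈ P}) : ℝ) := by
    intro k
    obtain ⟨C, hCmem, hCp⟩ := Finset.mem_image.mp (oi k).2
    exact ⟨C, ⟨hCmem, hCp⟩, fun C' hC' =>
      hL3 C' C ((hMCmem C').1 hC'.1) ((hMCmem C).1 hCmem) (hC'.2.trans hCp.symm)⟩
  set KcF : Fin n → Set W :=
    fun k => MC.choose (fun C => p C = ((oi k : {x // x ∈ P}) : ℝ)) (hval k) with hKcF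
  have hKcFmem : ∀ k, KcF k ∈ MC :=
    fun k => Finset.choose_mem (fun C => p C = ((oi k : {x // x ∈ P}) : ℝ)) MC (hval k)
  have hKcFp : ∀ k, p (KcF k) = ((oi k : {x // x ∈ P}) : ℝ) :=
    fun k => Finset.choose_property (fun C => p C = ((oi k : {x // x ∈ P}) : ℝ)) MC (hval k)
  set Kc : ℕ → Set W := fun i =>
    if h : 1 ≤ i ∧ i ≤ n then KcF ⟨i-1, by omega⟩ else ∅ with hKc
  have hKcval : ∀ i (h : 1 ≤ i ∧ i ≤ n) (hlt : i - 1 < n), Kc i = KcF ⟨i-1, hlt⟩ := by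
    intro i h hlt
    rw [hKc]; simp only [dif_pos h]
  have hKcmem' : ∀ i (h : 1 ≤ i ∧ i ≤ n),
      Kc i ∈ MC ∧ p (Kc i) = ((oi ⟨i-1, by omega⟩ : {x // x ∈ P}) : ℝ) := by
    intro i h
    rw [hKcval i h (by omega)]
    exact ⟨hKcFmem _, hKcFp _⟩
  have hKcmax : ∀ i (h : 1 ≤ i ∧ i ≤ n), IsMaxCliqueSet H (Kc i) :=
    fun i h => (hMCmem _).1 (hKcmem' i h).1
  set pt : ℕ → ℝ := fun i => p (Kc i) with hpt
  have hmono : ∀ i j, 1 ≤ i → i ≤ j → j ≤ n → pt i ≤ pt j := by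
    intro i j h1 h2 h3
    have hi : 1 ≤ i ∧ i ≤ n := ⟨h1, le_trans h2 h3⟩
    have hj : 1 ≤ j ∧ j ≤ n := ⟨le_trans h1 h2, h3⟩
    have e1 := (hKcmem' i hi).2
    have e2 := (hKcmem' j hj).2
    rw [hpt]; simp only []
    rw [e1, e2]
    have : (⟨i-1, by omega⟩ : Fin n) ≤ ⟨j-1, by omega⟩ := by
      simp only [Fin.mk_le_mk]; omega
    exact Subtype.coe_le_coe.mpr (oi.monotone this)
  have hvalid : ∀ i v, v ∈ Kc i → 1 ≤ i ∧ i ≤ n := by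
    intro i v hv
    by_contra h
    rw [hKc] at hv; simp only [dif_neg h] at hv
    exact hv
  refine ⟨⟨n, Kc, ?_, fun i h1 h2 => hKcmax i ⟨h1, h2⟩, ?_, ?_, ?_⟩, pt, hmono, ?_, ?_⟩
  · intro i h
    rw [hKc]; exact dif_neg (by omega)
  · -- surj
    intro C hC
    have hCMC : C ∈ MC := (hMCmem C).2 hC
    have hpC : p C ∈ P := Finset.mem_image_of_mem p hCMC
    obtain ⟨k, hk⟩ := oi.surjective ⟨p C, hpC⟩
    refine ⟨k.1 + 1, by omega, by omega, ?_⟩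
    have h : 1 ≤ k.1 + 1 ∧ k.1 + 1 ≤ n := ⟨by omega, by omega⟩
    have e := (hKcmem' _ h).2
    have : (⟨k.1 + 1 - 1, by omega⟩ : Fin n) = k := by
      apply Fin.ext; simp
    rw [this, hk] at e
    exact hL3 _ _ (hKcmax _ h) hC e
  · -- inj
    intro i j h1 h2 h3 h4 hEq
    have e1 := (hKcmem' i ⟨h1, h2⟩).2
    have e2 := (hKcmem' j ⟨h3, h4⟩).2
    rw [hEq] at e1
    have heq : oi (⟨i-1, by omega⟩ : Fin n) = oi (⟨j-1, by omega⟩ : Fin n) :=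
      Subtype.ext (e1.symm.trans e2)
    have heq2 := oi.injective heq
    have : i - 1 = j - 1 := congrArg Fin.val heq2
    omega
  · -- consec
    intro v i j k hij hjk hvi hvk
    have hiv := hvalid i v hvi
    have hkv := hvalid k v hvk
    have hjv : 1 ≤ j ∧ j ≤ n := ⟨le_trans hiv.1 hij, le_trans hjk hkv.2⟩
    have h1 := hL1 _ (hKcmax i hiv) v hvi
    have h2 := hL1 _ (hKcmax k hkv) v hvk
    refine hL2 _ (hKcmax j hjv) v ⟨?_, ?_⟩
    · exact le_trans h1.1 (hmono i j hiv.1 hij hjv.2)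
    · exact le_trans (hmono j k hjv.1 hjk hkv.2) h2.2
  · intro i h1 h2 v hv
    exact hL1 _ (hKcmax i ⟨h1, h2⟩) v hv
  · intro i h1 h2 v hv
    exact hL2 _ (hKcmax i ⟨h1, h2⟩) v hv

lemma cliquePath_lk_rk [Fintype W] {H : SimpleGraph W} (cp : CliquePath H) (v : W)
    (hv : ∃ m, v ∈ cp.Kc m) :
    ∃ i j, 1 ≤ i ∧ j ≤ cp.len ∧ i ≤ j ∧ v ∈ cp.Kc i ∧ v ∈ cp.Kc j ∧
      (∀ m, v ∈ cp.Kc m → i ≤ m ∧ m ≤ j) ∧ (∀ m, i ≤ m → m ≤ j → v ∈ cp.Kc m) := by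
  classical
  have hvalid : ∀ m, v ∈ cp.Kc m → 1 ≤ m ∧ m ≤ cp.len := by
    intro m hm
    by_contra h
    have : cp.Kc m = ∅ := cp.sentinel m (by omega)
    rw [this] at hm; exact hm
  set s : Set ℕ := {m | v ∈ cp.Kc m} with hsdef
  have hsne : s.Nonempty := hv
  have hbdd : BddAbove s := ⟨cp.len, fun m hm => (hvalid m hm).2⟩
  refine ⟨sInf s, sSup s, ?_, ?_, ?_, Nat.sInf_mem hsne, Nat.sSup_mem hsne hbdd, ?_, ?_⟩
  · exact (hvalid _ (Nat.sInf_mem hsne)).1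
  · exact (hvalid _ (Nat.sSup_mem hsne hbdd)).2
  · exact le_csSup hbdd (Nat.sInf_mem hsne)
  · exact fun m hm => ⟨Nat.sInf_le hm, le_csSup hbdd hm⟩
  · exact fun m h1 h2 => cp.consec v _ m _ h1 h2 (Nat.sInf_mem hsne) (Nat.sSup_mem hsne hbdd)

end Aux

/-- Let `G` be a split graph with split partition `K ⊎ S`, no
universal vertex, `s ∈ S`, and let `H = G^{N[s]}`, `K_s = N(s)`, `K_o = K \ N(s)`.
Then `H` satisfies condition (♯) iff `H` is an interval graph admitting a clique path
`⟨K_1, …, K_ℓ⟩` with `N_H(v) ∩ K_o ⊆ K_{lk(v)} ∪ K_{rk(v)}` for every `v ∈ K_s`. -/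
theorem statement17 {V : Type*} [Fintype V] (G : SimpleGraph V) (K S : Set V)
    (hKS : IsSplitPartition G K S) (hu : ¬ HasUniversalVertex G)
    (s : V) (hs : s ∈ S) :
    SatisfiesSharp G (closedNbhd G s) ↔
      (IsIntervalGraph (auxGraph G (closedNbhd G s)) ∧
        ∃ cp : CliquePath (auxGraph G (closedNbhd G s)),
          ∀ v ∈ G.neighborSet s, ∃ i j : ℕ,
            1 ≤ i ∧ j ≤ cp.len ∧ i ≤ j ∧
            v ∈ cp.Kc i ∧ v ∈ cp.Kc j ∧
            (∀ m : ℕ, v ∈ cp.Kc m → i ≤ m ∧ m ≤ j) ∧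
            (∀ u ∈ (auxGraph G (closedNbhd G s)).neighborSet v,
              u ∈ K \ G.neighborSet s → u ∈ cp.Kc i ∪ cp.Kc j)) := by
  classical
  obtain ⟨hUn, hDisj, hKcl, hSind⟩ := hKS
  set Kp := closedNbhd G s with hKpdef
  set Hh := auxGraph G Kp with hHhdef
  have hNe : Nonempty V := ⟨s⟩
  have hsKp : s ∈ Kp := Set.mem_insert _ _
  have hmemKp : ∀ v, v ∈ Kp ↔ v = s ∨ G.Adj s v := by
    intro v
    simp [hKpdef, closedNbhd, Set.mem_insert_iff, SimpleGraph.mem_neighborSet]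
  have hKorS : ∀ v : V, v ∈ K ∨ v ∈ S := by
    intro v
    have : v ∈ K ∪ S := hUn ▸ Set.mem_univ v
    exact this
  have hsnotK : s ∉ K := fun h => (Set.disjoint_left.mp hDisj h) hs
  have hKsK : ∀ v, G.Adj s v → v ∈ K := by
    intro v hv
    rcases hKorS v with h | h
    · exact h
    · exact absurd hv (hSind hs h hv.ne)
  have hnotKp : ∀ u, u ∉ Kp → u ≠ s ∧ ¬ G.Adj s u := by
    intro u hu
    constructor
    · intro h; exact hu ((hmemKp u).2 (Or.inl h))
    · intro h; exact hu ((hmemKp u).2 (Or.inr h))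
  have hUniv : ∀ u, u ≠ s → Hh.Adj s u := by
    intro u hne
    refine (⟨Ne.symm hne, ?_⟩ : s ≠ u ∧ auxAdj G Kp s u)
    by_cases hKpu : u ∈ Kp
    · have huNs : G.Adj s u := by
        rcases (hmemKp u).1 hKpu with rfl | h
        · exact absurd rfl hne
        · exact h
      left
      refine ⟨hsKp, hKpu, ?_⟩
      intro hunion
      apply hu
      refine ⟨u, fun w hw => ?_⟩
      have hwmem : w ∈ G.neighborSet s ∪ G.neighborSet u := hunion ▸ Set.mem_univ w
      rcases hwmem with hws | hwu
      · exact hKcl (hKsK u huNs) (hKsK w hws) (Ne.symm hw)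
      · exact hwu
    · right; right; left
      exact ⟨hsKp, hKpu, fun hsub => hKpu (hsub (Set.mem_insert u _))⟩
  have hadjSS : ∀ v, G.Adj s v → ∀ u, u ∈ S → u ≠ s → (Hh.Adj v u ↔ ¬ G.Adj v u) := by
    intro v hv u huS hus
    have hvK : v ∈ K := hKsK v hv
    have hvKp : v ∈ Kp := (hmemKp v).2 (Or.inr hv)
    have huKp : u ∉ Kp := by
      intro h
      rcases (hmemKp u).1 h with rfl | h2
      · exact hus rfl
      · exact (Set.disjoint_left.mp hDisj (hKsK u h2)) huS
    have hneq : v ≠ u := fun h => (Set.disjoint_left.mp hDisj hvK) (h ▸ huS)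
    constructor
    · intro hH
      obtain ⟨-, hA⟩ : v ≠ u ∧ auxAdj G Kp v u := hH
      rcases hA with ⟨_, h2, _⟩ | ⟨hh1, _, _⟩ | ⟨_, _, h3⟩ | ⟨h2, _, _⟩
      · exact absurd h2 huKp
      · exact absurd hvKp hh1
      · intro hGadj
        apply h3
        intro w hw
        rcases Set.mem_insert_iff.1 hw with rfl | hwN
        · exact Set.mem_insert_iff.2 (Or.inr hGadj)
        · have hadjuw : G.Adj u w := hwN
          have hwK : w ∈ K := by
            rcases hKorS w with h | h
            · exact h
            · exact absurd hadjuw (hSind huS h hadjuw.ne)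
          rcases eq_or_ne w v with rfl | hwv
          · exact Set.mem_insert _ _
          · exact Set.mem_insert_iff.2 (Or.inr (hKcl hvK hwK (fun h => hwv h.symm)))
      · exact absurd h2 huKp
    · intro hnadj
      refine (⟨hneq, Or.inr (Or.inr (Or.inl ⟨hvKp, huKp, ?_⟩))⟩ : v ≠ u ∧ auxAdj G Kp v u)
      intro hsub
      rcases Set.mem_insert_iff.1 (hsub (Set.mem_insert u _)) with h | h
      · exact hneq h.symm
      · exact hnadj h
  have hKsInClique : ∀ v, G.Adj s v → ∀ u, u ∈ S → u ≠ s → ¬ G.Adj v u →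
      ∀ C, IsMaxCliqueSet Hh C → u ∈ C → v ∈ C := by
    intro v hv u huS hus hnadj C hC huC
    have hvK : v ∈ K := hKsK v hv
    have hvKp : v ∈ Kp := (hmemKp v).2 (Or.inr hv)
    have hvns : v ≠ s := fun h => hsnotK (h ▸ hvK)
    have huKp : u ∉ Kp := by
      intro h
      rcases (hmemKp u).1 h with rfl | h2
      · exact hus rfl
      · exact (Set.disjoint_left.mp hDisj (hKsK u h2)) huS
    apply mem_maxCliqueSet_of_adj hC
    intro w hwC hwv
    by_cases hwu : w = u
    · subst hwu
      exact (hadjSS v hv w huS hus).2 hnadj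
    · have hadjuw : Hh.Adj u w := hC.1 huC hwC (fun h => hwu h.symm)
      have hvwne : v ≠ w := fun h => hwv h.symm
      by_cases hwKp : w ∈ Kp
      · rcases (hmemKp w).1 hwKp with rfl | hws
        · exact (hUniv v hvns).symm
        · have hnwu : ¬ G.Adj w u := (hadjSS w hws u huS hus).1 hadjuw.symm
          refine (⟨hvwne, Or.inl ⟨hvKp, hwKp, ?_⟩⟩ : v ≠ w ∧ auxAdj G Kp v w)
          intro hunion
          have humem : u ∈ G.neighborSet v ∪ G.neighborSet w := hunion ▸ Set.mem_univ u
          rcases humem with h | h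
          · exact hnadj h
          · exact hnwu h
      · have hGuw : G.Adj u w := by
          rcases (hadjuw : u ≠ w ∧ auxAdj G Kp u w).2 with ⟨h1, _, _⟩ | ⟨_, _, h3⟩ | ⟨h1, _, _⟩ | ⟨h2, _, _⟩
          · exact absurd h1 huKp
          · exact h3
          · exact absurd h1 huKp
          · exact absurd h2 hwKp
        refine (⟨hvwne, Or.inr (Or.inr (Or.inl ⟨hvKp, hwKp, ?_⟩))⟩ : v ≠ w ∧ auxAdj G Kp v w)
        intro hsub
        rcases Set.mem_insert_iff.1 (hsub (Set.mem_insert_iff.2 (Or.inr hGuw.symm))) with h | h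
        · exact (Set.disjoint_left.mp hDisj hvK) (h ▸ huS)
        · exact hnadj h
  have hvsome : ∀ (cp : CliquePath Hh) (v : V), ∃ m, v ∈ cp.Kc m := by
    intro cp v
    obtain ⟨D, hD, hsub⟩ := exists_maxCliqueSet_superset Hh (SimpleGraph.isClique_singleton v)
    obtain ⟨i, _, _, h3⟩ := cp.surj D hD
    exact ⟨i, h3 ▸ hsub rfl⟩
  constructor
  · rintro ⟨M, hM⟩
    obtain ⟨cp, pt, hmono, hP1, hP2⟩ := exists_cliquePath_of_model Hh M
    refine ⟨⟨M⟩, cp, ?_⟩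
    intro v hv
    have hvs : G.Adj s v := hv
    obtain ⟨i, j, h1, h2, h3, h4, h5, h6, h7⟩ := cliquePath_lk_rk cp v (hvsome cp v)
    refine ⟨i, j, h1, h2, h3, h4, h5, h6, ?_⟩
    intro u huN huK
    have hadj : Hh.Adj v u := huN
    have huKp : u ∉ Kp := by
      intro h
      rcases (hmemKp u).1 h with rfl | h2
      · exact hsnotK huK.1
      · exact huK.2 h2
    have hvKp : v ∈ Kp := (hmemKp v).2 (Or.inr hvs)
    have hGadj : G.Adj v u := hKcl (hKsK v hvs) huK.1 hadj.ne
    have hns : ¬ (M.ival u ⊆ M.ival v) := fun hsub => ((hM v hvKp u huKp).1 hsub) hGadj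
    have hpair : Hh.IsClique {v, u} :=
      (by haveI := Hh.symm; exact Set.pairwise_pair_of_symm.2 (fun _ => hadj))
    obtain ⟨D, hD, hsubD⟩ := exists_maxCliqueSet_superset Hh hpair
    obtain ⟨m, hm1, hm2, hm3⟩ := cp.surj D hD
    have hvD : v ∈ cp.Kc m := hm3 ▸ hsubD (Set.mem_insert _ _)
    have huD : u ∈ cp.Kc m := hm3 ▸ hsubD (Set.mem_insert_iff.2 (Or.inr rfl))
    have hmbound := h6 m hvD
    have hnsub : M.lo u < M.lo v ∨ M.hi v < M.hi u := by
      by_contra hcon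
      push_neg at hcon
      exact hns (Set.Icc_subset_Icc hcon.1 hcon.2)
    have hivi := hP1 i h1 (le_trans h3 h2) v h4
    have hivj := hP1 j (le_trans h1 h3) h2 v h5
    have hum := hP1 m hm1 hm2 u huD
    rw [IntervalModel.ival, Set.mem_Icc] at hivi hivj hum
    rcases hnsub with hlo | hhi
    · left
      refine hP2 i h1 (le_trans h3 h2) u ⟨?_, ?_⟩
      · exact le_of_lt (lt_of_lt_of_le hlo hivi.1)
      · exact le_trans (hmono i m h1 hmbound.1 hm2) hum.2
    · right
      refine hP2 j (le_trans h1 h3) h2 u ⟨?_, ?_⟩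
      · exact le_trans hum.1 (hmono m j hm1 hmbound.2 h2)
      · exact le_of_lt (lt_of_le_of_lt hivj.2 hhi)
  · rintro ⟨hIG, cp, hprop⟩
    choose lk rk h1 h2 h3 h4 h5 h6 h7 using fun v => cliquePath_lk_rk cp v (hvsome cp v)
    have hsIn : ∀ m, 1 ≤ m → m ≤ cp.len → s ∈ cp.Kc m := by
      intro m hm1 hm2
      apply mem_maxCliqueSet_of_adj (cp.maxclique m hm1 hm2)
      intro w hw hws
      exact hUniv w hws
    have hlen1 : 1 ≤ cp.len := le_trans (h1 s) (le_trans (h3 s) (h2 s))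
    have hlks : lk s = 1 := le_antisymm ((h6 s 1 (hsIn 1 le_rfl hlen1)).1) (h1 s)
    have hrks : rk s = cp.len :=
      le_antisymm (h2 s) ((h6 s cp.len (hsIn _ hlen1 le_rfl)).2)
    set ε : V → ℝ := fun v =>
      if v = s then 2/5 else if G.Adj s v then 1/5 else if v ∈ K then 3/10 else 1/10 with hε
    have hεpos : ∀ v, 0 < ε v := by
      intro v; rw [hε]; dsimp only; split_ifs <;> norm_num
    have hεle : ∀ v, ε v ≤ 2/5 := by
      intro v; rw [hε]; dsimp only; split_ifs <;> norm_num
    have hεle' : ∀ v, v ≠ s → ε v ≤ 3/10 := by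
      intro v hv; rw [hε]; dsimp only; rw [if_neg hv]; split_ifs <;> norm_num
    have hεs : ε s = 2/5 := by rw [hε]; dsimp only; rw [if_pos rfl]
    have hεKs : ∀ v, G.Adj s v → ε v = 1/5 := by
      intro v hv
      have : v ≠ s := fun h => hsnotK (h ▸ hKsK v hv)
      rw [hε]; dsimp only; rw [if_neg this, if_pos hv]
    have hεKo : ∀ v, v ∈ K → ¬ G.Adj s v → ε v = 3/10 := by
      intro v hvK hv
      have : v ≠ s := fun h => hsnotK (h ▸ hvK)
      rw [hε]; dsimp only; rw [if_neg this, if_neg hv, if_pos hvK]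
    have hεS : ∀ v, v ≠ s → ¬ G.Adj s v → v ∉ K → ε v = 1/10 := by
      intro v h0 h1' h2'
      rw [hε]; dsimp only; rw [if_neg h0, if_neg h1', if_neg h2']
    set lo : V → ℝ := fun v => (lk v : ℝ) - ε v with hlo
    set hi : V → ℝ := fun v => (rk v : ℝ) + ε v with hhi
    have hlkrkR : ∀ v, (lk v : ℝ) ≤ (rk v : ℝ) := fun v => Nat.cast_le.2 (h3 v)
    have hlohi : ∀ v, lo v ≤ hi v := by
      intro v
      have := hεpos v
      have := hlkrkR v
      rw [hlo, hhi]; dsimp only; linarith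
    have hadj_iff : ∀ u v : V, u ≠ v →
        (Hh.Adj u v ↔ (Set.Icc (lo u) (hi u) ∩ Set.Icc (lo v) (hi v)).Nonempty) := by
      intro u v hne
      constructor
      · intro hadj
        have hpair : Hh.IsClique {u, v} :=
          (by haveI := Hh.symm; exact Set.pairwise_pair_of_symm.2 (fun _ => hadj))
        obtain ⟨D, hD, hsubD⟩ := exists_maxCliqueSet_superset Hh hpair
        obtain ⟨m, hm1, hm2, hm3⟩ := cp.surj D hD
        have huD : u ∈ cp.Kc m := hm3 ▸ hsubD (Set.mem_insert _ _)
        have hvD : v ∈ cp.Kc m := hm3 ▸ hsubD (Set.mem_insert_iff.2 (Or.inr rfl))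
        have hu6 := h6 u m huD
        have hv6 := h6 v m hvD
        have hcu1 : (lk u : ℝ) ≤ (m : ℝ) := Nat.cast_le.2 hu6.1
        have hcu2 : (m : ℝ) ≤ (rk u : ℝ) := Nat.cast_le.2 hu6.2
        have hcv1 : (lk v : ℝ) ≤ (m : ℝ) := Nat.cast_le.2 hv6.1
        have hcv2 : (m : ℝ) ≤ (rk v : ℝ) := Nat.cast_le.2 hv6.2
        have hpu := hεpos u
        have hpv := hεpos v
        refine ⟨(m : ℝ), Set.mem_Icc.2 ⟨?_, ?_⟩, Set.mem_Icc.2 ⟨?_, ?_⟩⟩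
        · rw [hlo]; dsimp only; linarith
        · rw [hhi]; dsimp only; linarith
        · rw [hlo]; dsimp only; linarith
        · rw [hhi]; dsimp only; linarith
      · rintro ⟨x, hxu, hxv⟩
        rw [Set.mem_Icc] at hxu hxv
        rw [hlo, hhi] at hxu hxv
        dsimp only at hxu hxv
        have hbu := hεle u
        have hbv := hεle v
        have hle1 : lk u ≤ rk v := by
          have : (lk u : ℝ) < (rk v : ℝ) + 1 := by linarith [hxu.1, hxv.2]
          exact_mod_cast Nat.lt_succ_iff.1 (by exact_mod_cast this)
        have hle2 : lk v ≤ rk u := by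
          have : (lk v : ℝ) < (rk u : ℝ) + 1 := by linarith [hxv.1, hxu.2]
          exact_mod_cast Nat.lt_succ_iff.1 (by exact_mod_cast this)
        set m := max (lk u) (lk v) with hm
        have humem : u ∈ cp.Kc m :=
          h7 u m (le_max_left _ _) (max_le (h3 u) hle2)
        have hvmem : v ∈ cp.Kc m :=
          h7 v m (le_max_right _ _) (max_le hle1 (h3 v))
        have hm1 : 1 ≤ m := le_trans (h1 u) (le_max_left _ _)
        have hm2 : m ≤ cp.len := le_trans (max_le (h3 u) hle2) (h2 u)
        exact (cp.maxclique m hm1 hm2).1 humem hvmem hne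
    refine ⟨⟨lo, hi, hlohi, hadj_iff⟩, ?_⟩
    intro v hvKp u huKp
    obtain ⟨hu_ne_s, hu_nadj⟩ := hnotKp u huKp
    have hIvalU : IntervalModel.ival ⟨lo, hi, hlohi, hadj_iff⟩ u = Set.Icc (lo u) (hi u) := rfl
    have hIvalV : IntervalModel.ival ⟨lo, hi, hlohi, hadj_iff⟩ v = Set.Icc (lo v) (hi v) := rfl
    rw [hIvalU, hIvalV]
    have hloUmem : lo u ∈ Set.Icc (lo u) (hi u) := Set.mem_Icc.2 ⟨le_rfl, hlohi u⟩
    rcases (hmemKp v).1 hvKp with rfl | hvNs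
    · refine iff_of_true ?_ hu_nadj
      have hd1 : (1 : ℝ) ≤ (lk u : ℝ) := by exact_mod_cast h1 u
      have hd2 : (rk u : ℝ) ≤ (cp.len : ℝ) := by exact_mod_cast h2 u
      have hεu := hεle' u hu_ne_s
      apply Set.Icc_subset_Icc
      · rw [hlo]; dsimp only; rw [hlks, hεs]; push_cast; linarith
      · rw [hhi]; dsimp only; rw [hrks, hεs]; linarith
    · have hvK : v ∈ K := hKsK v hvNs
      have hvns : v ≠ s := fun h => hsnotK (h ▸ hvK)
      have hεv : ε v = 1/5 := hεKs v hvNs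
      have hne : v ≠ u := fun h => huKp (h ▸ hvKp)
      by_cases huK : u ∈ K
      · have hGadj : G.Adj v u := hKcl hvK huK hne
        refine iff_of_false ?_ (not_not_intro hGadj)
        have hεu : ε u = 3/10 := hεKo u huK hu_nadj
        by_cases hHadj : Hh.Adj v u
        · obtain ⟨i', j', p1, p2, p3, p4, p5, p6, p7⟩ := hprop v hvNs
          have hi' : i' = lk v := le_antisymm ((p6 _ (h4 v)).1) ((h6 v i' p4).1)
          have hj' : j' = rk v := le_antisymm ((h6 v j' p5).2) ((p6 _ (h5 v)).2)
          have hu_mem : u ∈ cp.Kc i' ∪ cp.Kc j' :=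
            p7 u hHadj ⟨huK, hu_nadj⟩
          intro hsub
          have hlosub := (Set.mem_Icc.1 (hsub hloUmem)).1
          have hhiUmem : hi u ∈ Set.Icc (lo u) (hi u) := Set.mem_Icc.2 ⟨hlohi u, le_rfl⟩
          have hhisub := (Set.mem_Icc.1 (hsub hhiUmem)).2
          rcases hu_mem with hL | hR
          · rw [hi'] at hL
            have hlku : (lk u : ℝ) ≤ (lk v : ℝ) := Nat.cast_le.2 (h6 u _ hL).1
            rw [hlo] at hlosub; dsimp only at hlosub
            rw [hεu, hεv] at hlosub
            linarith
          · rw [hj'] at hR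
            have hrku : (rk v : ℝ) ≤ (rk u : ℝ) := Nat.cast_le.2 (h6 u _ hR).2
            rw [hhi] at hhisub; dsimp only at hhisub
            rw [hεu, hεv] at hhisub
            linarith
        · intro hsub
          exact hHadj ((hadj_iff v u hne).2 ⟨lo u, hsub hloUmem, hloUmem⟩)
      · have huS : u ∈ S := (hKorS u).resolve_left huK
        have hiff := hadjSS v hvNs u huS hu_ne_s
        have hεu : ε u = 1/10 := hεS u hu_ne_s hu_nadj huK
        constructor
        · intro hsub hGadj
          have hnH : ¬ Hh.Adj v u := fun h => (hiff.1 h) hGadj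
          exact hnH ((hadj_iff v u hne).2 ⟨lo u, hsub hloUmem, hloUmem⟩)
        · intro hnGadj
          have hvin : ∀ C, IsMaxCliqueSet Hh C → u ∈ C → v ∈ C :=
            hKsInClique v hvNs u huS hu_ne_s hnGadj
          have hlk : lk v ≤ lk u :=
            (h6 v _ (hvin _ (cp.maxclique _ (h1 u) (le_trans (h3 u) (h2 u))) (h4 u))).1
          have hrk : rk u ≤ rk v :=
            (h6 v _ (hvin _ (cp.maxclique _ (le_trans (h1 u) (h3 u)) (h2 u)) (h5 u))).2
          have hc1 : (lk v : ℝ) ≤ (lk u : ℝ) := Nat.cast_le.2 hlk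
          have hc2 : (rk u : ℝ) ≤ (rk v : ℝ) := Nat.cast_le.2 hrk
          apply Set.Icc_subset_Icc
          · rw [hlo]; dsimp only; rw [hεu, hεv]; linarith
          · rw [hhi]; dsimp only; rw [hεu, hεv]; linarith

end CAG
end

section
/- Let ⟨K_1,…,K_ℓ⟩ be a clique path of an interval graph H, and set K_0 = K_{ℓ+1} = ∅. If H is quasi-prime, then there do not exist indices p < q with [p, q] a proper subinterval of [1, ℓ] such that both K_{p−1} ∩ K_p \ K_q and K_q ∩ K_{q+1} \ K_p are empty. -/
namespace CAG

variable {V : Type*}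

/-- In a finite graph, every clique extends to a maximal clique. -/
lemma exists_maxCliqueSet_superset_s18 {V : Type*} [Fintype V] (H : SimpleGraph V)
    {s : Set V} (hs : H.IsClique s) : ∃ C : Set V, IsMaxCliqueSet H C ∧ s ⊆ C := by
  obtain ⟨C, ⟨hC, hsC⟩, hmax⟩ := Set.Finite.exists_maximalFor (id : Set V → Set V)
    {C | H.IsClique C ∧ s ⊆ C} (Set.toFinite _) ⟨s, hs, subset_rfl⟩
  exact ⟨C, ⟨hC, fun C' hC' hCC' => Set.Subset.antisymm hCC' (hmax ⟨hC', hsC.trans hCC'⟩ hCC')⟩, hsC⟩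

/-- Let `⟨K_1, …, K_ℓ⟩` be a clique path of an interval graph `H`
(with empty sentinels `K_0` and `K_{ℓ+1}`).  If `H` is quasi-prime, then there are no
indices `p < q` with `[p, q]` a proper subinterval of `[1, ℓ]` such that both
`K_{p-1} ∩ K_p \ K_q` and `K_q ∩ K_{q+1} \ K_p` are empty. -/
theorem statement18 {V : Type*} [Fintype V] (H : SimpleGraph V)
    (hH : IsIntervalGraph H) (cp : CliquePath H) (hqp : QuasiPrime H) :
    ¬ ∃ p q : ℕ, p < q ∧ 1 ≤ p ∧ q ≤ cp.len ∧ (1 < p ∨ q < cp.len) ∧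
        (cp.Kc (p - 1) ∩ cp.Kc p) \ cp.Kc q = ∅ ∧
        (cp.Kc q ∩ cp.Kc (q + 1)) \ cp.Kc p = ∅ := by
  classical
  rintro ⟨p, q, hpq, hp1, hqlen, hproper, hPQ1, hPQ2⟩
  have hq1 : 1 ≤ q := hp1.trans hpq.le
  have hplen : p ≤ cp.len := hpq.le.trans hqlen
  have hKp := cp.maxclique p hp1 hplen
  have hKq := cp.maxclique q hq1 hqlen
  have hKpq : cp.Kc p ≠ cp.Kc q := fun h => hpq.ne (cp.inj p q hp1 hplen hq1 hqlen h)
  have hP1 : (cp.Kc (p - 1) ∩ cp.Kc p) ⊆ cp.Kc q := Set.diff_eq_empty.mp hPQ1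
  have hP2 : (cp.Kc q ∩ cp.Kc (q + 1)) ⊆ cp.Kc p := Set.diff_eq_empty.mp hPQ2
  set A : Set V := cp.Kc p ∩ cp.Kc q with hA
  set U : Set V := {x | ∃ i, p ≤ i ∧ i ≤ q ∧ x ∈ cp.Kc i} with hUdef
  set M : Set V := U \ A with hMdef
  -- every vertex of A lies in all cliques K_i for p ≤ i ≤ q
  have hAall : ∀ x ∈ A, ∀ i, p ≤ i → i ≤ q → x ∈ cp.Kc i := by
    rintro x ⟨hxp, hxq⟩ i hpi hiq
    exact cp.consec x p i q hpi hiq hxp hxq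
  -- vertices of A are adjacent to all of M
  have hIn : ∀ x ∈ A, ∀ u ∈ M, H.Adj x u := by
    rintro x hx u ⟨⟨i, hpi, hiq, hui⟩, huA⟩
    have hxi : x ∈ cp.Kc i := hAall x hx i hpi hiq
    have hxu : x ≠ u := fun h => huA (h ▸ hx)
    exact (cp.maxclique i (hp1.trans hpi) (hiq.trans hqlen)).1 hxi hui hxu
  -- vertices outside U are adjacent to nothing in M
  have hOut : ∀ x, x ∉ U → ∀ u ∈ M, ¬ H.Adj x u := by
    rintro x hxU u ⟨⟨i, hpi, hiq, hui⟩, huA⟩ hadj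
    have hpair : H.IsClique {x, u} := by
      intro a ha b hb hab
      rcases ha with rfl | ha <;> rcases hb with rfl | hb
      · exact absurd rfl hab
      · rw [Set.mem_singleton_iff] at hb; subst hb; exact hadj
      · rw [Set.mem_singleton_iff] at ha; subst ha; exact hadj.symm
      · rw [Set.mem_singleton_iff] at ha hb; subst ha; subst hb; exact absurd rfl hab
    obtain ⟨C, hC, hsC⟩ := exists_maxCliqueSet_superset_s18 H hpair
    obtain ⟨j, hj1, hjlen, hjC⟩ := cp.surj C hC
    have hxj : x ∈ cp.Kc j := by rw [hjC]; exact hsC (Set.mem_insert _ _)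
    have huj : u ∈ cp.Kc j := by
      rw [hjC]; exact hsC (Set.mem_insert_of_mem _ (Set.mem_singleton _))
    have hjout : j < p ∨ q < j := by
      by_contra h
      push_neg at h
      exact hxU ⟨j, h.1, h.2, hxj⟩
    rcases hjout with hjp | hqj
    · have hjp1 : j ≤ p - 1 := Nat.le_sub_one_of_lt hjp
      have hp1i : p - 1 ≤ i := (Nat.sub_le p 1).trans hpi
      have hu1 : u ∈ cp.Kc (p - 1) := cp.consec u j (p - 1) i hjp1 hp1i huj hui
      have hu2 : u ∈ cp.Kc p := cp.consec u j p i (hjp1.trans (Nat.sub_le p 1)) hpi huj hui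
      exact huA ⟨hu2, hP1 ⟨hu1, hu2⟩⟩
    · have hu1 : u ∈ cp.Kc q := cp.consec u i q j hiq hqj.le hui huj
      have hu2 : u ∈ cp.Kc (q + 1) := cp.consec u i (q + 1) j (hiq.trans q.le_succ) hqj hui huj
      exact huA ⟨hP2 ⟨hu1, hu2⟩, hu1⟩
  -- M is a module
  have hmod : GraphModule H M := by
    intro u hu v hv x hx
    by_cases hxA : x ∈ A
    · exact iff_of_true (hIn x hxA u hu) (hIn x hxA v hv)
    · have hxU : x ∉ U := fun h => hx ⟨h, hxA⟩
      exact iff_of_false (hOut x hxU u hu) (hOut x hxU v hv)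
  -- M ≠ univ
  have hne : M ≠ Set.univ := by
    have : ∃ x, x ∉ M := by
      rcases hproper with hp2 | hqlt
      · have hp11 : 1 ≤ p - 1 := Nat.le_sub_one_of_lt hp2
        have hp1len : p - 1 ≤ cp.len := (Nat.sub_le p 1).trans hplen
        have hK := cp.maxclique (p - 1) hp11 hp1len
        have hne' : ¬ cp.Kc (p - 1) ⊆ cp.Kc p := by
          intro hsub
          exact absurd (cp.inj (p - 1) p hp11 hp1len hp1 hplen (hK.2 _ hKp.1 hsub))
            (Nat.sub_one_lt (by omega)).ne
        obtain ⟨x, hx1, hx2⟩ := Set.not_subset.mp hne'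
        refine ⟨x, fun hxM => ?_⟩
        obtain ⟨⟨i, hpi, hiq, hxi⟩, _⟩ := hxM
        exact hx2 (cp.consec x (p - 1) p i (Nat.sub_le p 1) hpi hx1 hxi)
      · have hq1len : q + 1 ≤ cp.len := hqlt
        have hK := cp.maxclique (q + 1) (by omega) hq1len
        have hne' : ¬ cp.Kc (q + 1) ⊆ cp.Kc q := by
          intro hsub
          exact absurd (cp.inj (q + 1) q (by omega) hq1len hq1 hqlen (hK.2 _ hKq.1 hsub))
            (by omega)
        obtain ⟨x, hx1, hx2⟩ := Set.not_subset.mp hne'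
        refine ⟨x, fun hxM => ?_⟩
        obtain ⟨⟨i, hpi, hiq, hxi⟩, _⟩ := hxM
        exact hx2 (cp.consec x i q (q + 1) hiq q.le_succ hxi hx1)
    obtain ⟨x, hx⟩ := this
    exact fun h => hx (h ▸ Set.mem_univ x)
  -- two distinct elements of M
  have hu0 : ∃ u, u ∈ cp.Kc p ∧ u ∉ cp.Kc q := by
    by_contra h
    push_neg at h
    exact hKpq (hKp.2 _ hKq.1 h)
  have hw0 : ∃ w, w ∈ cp.Kc q ∧ w ∉ cp.Kc p := by
    by_contra h
    push_neg at h
    exact hKpq (hKq.2 _ hKp.1 h).symm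
  obtain ⟨u₀, hu₀p, hu₀q⟩ := hu0
  obtain ⟨w₀, hw₀q, hw₀p⟩ := hw0
  have hu₀M : u₀ ∈ M := ⟨⟨p, le_refl p, hpq.le, hu₀p⟩, fun h => hu₀q h.2⟩
  have hw₀M : w₀ ∈ M := ⟨⟨q, hpq.le, le_refl q, hw₀q⟩, fun h => hw₀p h.1⟩
  have hnsub : ¬ M.Subsingleton := fun h =>
    hu₀q ((h hu₀M hw₀M) ▸ hw₀q)
  -- quasi-primeness: M is a clique
  have hclq : H.IsClique M := hqp M hmod hne hnsub
  -- then M ∪ A is a clique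
  have hMA : H.IsClique (M ∪ A) := by
    rintro x (hx | hx) y (hy | hy) hxy
    · exact hclq hx hy hxy
    · exact (hIn y hy x hx).symm
    · exact hIn x hx y hy
    · exact hKp.1 hx.1 hy.1 hxy
  have hsubP : cp.Kc p ⊆ M ∪ A := by
    intro v hv
    by_cases hvA : v ∈ A
    · exact Or.inr hvA
    · exact Or.inl ⟨⟨p, le_refl p, hpq.le, hv⟩, hvA⟩
  have hsubQ : cp.Kc q ⊆ M ∪ A := by
    intro v hv
    by_cases hvA : v ∈ A
    · exact Or.inr hvA
    · exact Or.inl ⟨⟨q, hpq.le, le_refl q, hv⟩, hvA⟩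
  have hPeq : cp.Kc p = M ∪ A := hKp.2 _ hMA hsubP
  have hQeq : cp.Kc q = M ∪ A := hKq.2 _ hMA hsubQ
  exact hKpq (hPeq.trans hQeq.symm)

end CAG
end
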